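/- arXiv:1703.01535 — 5 statements merged into one kernel-verified Lean document; each statement's English description precedes it below -/
import Mathlib

section
/- Let n ≥ 1, let 1 < p < ∞ with q = p/(p−1), and let f be n-times differentiable on an open interval containing [a,b] with f^(n) absolutely continuous on [a,b] and f^(n) ∈ L^p[a,b]. Then for every x ∈ [a,(a+b)/2], | (1/n)·( (f(x)+f(a+b−x))/2 + Σ_{k=1}^{n−1} G_k(x) ) − (1/(b−a))·∫_a^b f(y) dy | ≤ (2^{1/q}/(n!·(b−a)))·( (x−a)^{nq+1} + ((a+b)/2 − x)^{nq+1} )^{1/q} · B((n−1)q+1, q+1)^{1/q} · ‖f^(n)‖_{L^p[a,b]}. -/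
open MeasureTheory Set

/-- The Guessab–Schmeisser / Fink-type kernel `S(t,x)` on `[a,b]`. -/
noncomputable def Skernel (a b x t : ℝ) : ℝ :=
  if t ≤ x then t - a else if t < a + b - x then t - (a + b) / 2 else t - b

/-- `g` is absolutely continuous on `[a,b]`. -/
def AbsCont (g : ℝ → ℝ) (a b : ℝ) : Prop :=
  ∃ h : ℝ → ℝ, IntervalIntegrable h MeasureTheory.volume a b ∧
    ∀ t ∈ Set.Icc a b, g t = g a + ∫ s in a..t, h s

/-- The term `G_k(x)` from the Guessab–Schmeisser expansion. -/
noncomputable def Gterm (f : ℝ → ℝ) (n : ℕ) (a b x : ℝ) (k : ℕ) : ℝ :=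
  (((n : ℝ) - k) / ((k.factorial : ℝ) * (b - a))) *
    ((x - a) ^ k *
        (iteratedDeriv (k - 1) f a + (-1 : ℝ) ^ (k + 1) * iteratedDeriv (k - 1) f b)
      + (1 + (-1 : ℝ) ^ (k + 1)) * ((a + b) / 2 - x) ^ k *
          iteratedDeriv (k - 1) f ((a + b) / 2))

/-- The real Euler Beta function, as an integral. -/
noncomputable def betaR (u v : ℝ) : ℝ :=
  ∫ s in (0 : ℝ)..1, s ^ (u - 1) * (1 - s) ^ (v - 1)

open intervalIntegral

namespace GS


lemma derivs {f : ℝ → ℝ} {s : Set ℝ} (hs : IsOpen s) {n : ℕ}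
    (hf : ContDiffOn ℝ (n : ℕ∞) f s) :
    (∀ k, k < n → ∀ t ∈ s, HasDerivAt (iteratedDeriv k f) (iteratedDeriv (k + 1) f t) t) ∧
      (∀ k, k ≤ n → ContinuousOn (iteratedDeriv k f) s) := by
  have hiter : ∀ (k : ℕ), EqOn (iteratedDerivWithin k f s) (iteratedDeriv k f) s := by
    intro k t ht
    rw [iteratedDerivWithin_eq_iteratedFDerivWithin, iteratedDeriv_eq_iteratedFDeriv,
      iteratedFDerivWithin_of_isOpen k hs ht]
  constructor
  · intro k hk t ht
    have hdiff : DifferentiableOn ℝ (iteratedDerivWithin k f s) s :=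
      hf.differentiableOn_iteratedDerivWithin (by exact_mod_cast hk) hs.uniqueDiffOn
    have hdiff' : DifferentiableOn ℝ (iteratedDeriv k f) s :=
      hdiff.congr fun u hu => (hiter k hu).symm
    have hda : DifferentiableAt ℝ (iteratedDeriv k f) t :=
      hdiff'.differentiableAt (hs.mem_nhds ht)
    rw [iteratedDeriv_succ]
    exact hda.hasDerivAt
  · intro k hk
    exact (hf.continuousOn_iteratedDerivWithin (by exact_mod_cast hk) hs.uniqueDiffOn).congr
      fun u hu => (hiter k hu).symm



variable {f : ℝ → ℝ} {s : Set ℝ} {n : ℕ}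

/-- Taylor's theorem with integral remainder. -/
lemma taylor_int
    (hder : ∀ k, k < n → ∀ t ∈ s, HasDerivAt (iteratedDeriv k f) (iteratedDeriv (k + 1) f t) t)
    (hcont : ∀ k, k ≤ n → ContinuousOn (iteratedDeriv k f) s) :
    ∀ j, j + 1 ≤ n → ∀ u v : ℝ, uIcc u v ⊆ s →
      ∫ t in u..v, (v - t) ^ j * iteratedDeriv (j + 1) f t
        = (j.factorial : ℝ) *
            (f v - ∑ i ∈ Finset.range (j + 1),
              iteratedDeriv i f u * (v - u) ^ i / (i.factorial : ℝ)) := by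
  intro j
  induction j with
  | zero =>
    intro hjn u v hsub
    have h1 : ∀ t ∈ uIcc u v, HasDerivAt f (iteratedDeriv 1 f t) t := by
      intro t ht
      have := hder 0 hjn t (hsub ht)
      rwa [iteratedDeriv_zero] at this
    have h2 : IntervalIntegrable (iteratedDeriv 1 f) volume u v :=
      ((hcont 1 hjn).mono hsub).intervalIntegrable
    have := integral_eq_sub_of_hasDerivAt h1 h2
    simp only [pow_zero, one_mul]
    rw [this]
    simp [iteratedDeriv_zero]
  | succ j ih =>
    intro hjn u v hsub
    have hj1 : j + 1 ≤ n := by omega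
    have hW : ∀ t ∈ uIcc u v, HasDerivAt (fun t => (v - t) ^ (j + 1))
        (-((j + 1 : ℝ) * (v - t) ^ j)) t := by
      intro t _
      have := ((hasDerivAt_id t).const_sub v).fun_pow (j + 1)
      simpa [mul_comm, mul_assoc] using this
    have hV : ∀ t ∈ uIcc u v, HasDerivAt (iteratedDeriv (j + 1) f)
        (iteratedDeriv (j + 2) f t) t := fun t ht => hder (j + 1) hjn t (hsub ht)
    have hint1 : IntervalIntegrable (fun t => -((j + 1 : ℝ) * (v - t) ^ j)) volume u v := by
      apply Continuous.intervalIntegrable; continuity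
    have hint2 : IntervalIntegrable (iteratedDeriv (j + 2) f) volume u v :=
      ((hcont (j + 2) hjn).mono hsub).intervalIntegrable
    have hIBP := integral_mul_deriv_eq_deriv_mul hW hV hint1 hint2
    have hzero : (v - v) ^ (j + 1) = (0 : ℝ) := by simp
    rw [hIBP, hzero]
    have hrew : ∫ t in u..v, -((j + 1 : ℝ) * (v - t) ^ j) * iteratedDeriv (j + 1) f t
        = -((j + 1 : ℝ) * ∫ t in u..v, (v - t) ^ j * iteratedDeriv (j + 1) f t) := by
      rw [← intervalIntegral.integral_const_mul, ← intervalIntegral.integral_neg]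
      congr 1; ext t; ring
    rw [hrew, ih hj1 u v hsub]
    conv_rhs => rw [Finset.sum_range_succ]
    have hfac : ((j + 1).factorial : ℝ) = (j + 1 : ℝ) * (j.factorial : ℝ) := by
      rw [Nat.factorial_succ]; push_cast; ring
    have hfacne : ((j + 1).factorial : ℝ) ≠ 0 := by positivity
    field_simp [hfac]
    rw [hfac]
    ring

/-- Closed form for `∫ (z-t)^j f^{(j)}`. -/
lemma iclosed
    (hder : ∀ k, k < n → ∀ t ∈ s, HasDerivAt (iteratedDeriv k f) (iteratedDeriv (k + 1) f t) t)
    (hcont : ∀ k, k ≤ n → ContinuousOn (iteratedDeriv k f) s) :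
    ∀ j, j ≤ n → ∀ z α β : ℝ, uIcc α β ⊆ s →
      ∫ t in α..β, (z - t) ^ j * iteratedDeriv j f t
        = (j.factorial : ℝ) *
            ((∫ t in α..β, f t) + ∑ i ∈ Finset.range j,
              ((z - β) ^ (i + 1) * iteratedDeriv i f β - (z - α) ^ (i + 1) * iteratedDeriv i f α)
                / ((i + 1).factorial : ℝ)) := by
  intro j
  induction j with
  | zero =>
    intro _ z α β _
    simp [iteratedDeriv_zero]
  | succ j ih =>
    intro hjn z α β hsub
    have hj : j ≤ n := by omega
    have hW : ∀ t ∈ uIcc α β, HasDerivAt (fun t => (z - t) ^ (j + 1))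
        (-((j + 1 : ℝ) * (z - t) ^ j)) t := by
      intro t _
      have := ((hasDerivAt_id t).const_sub z).fun_pow (j + 1)
      simpa [mul_comm, mul_assoc] using this
    have hV : ∀ t ∈ uIcc α β, HasDerivAt (iteratedDeriv j f)
        (iteratedDeriv (j + 1) f t) t := fun t ht => hder j hjn t (hsub ht)
    have hint1 : IntervalIntegrable (fun t => -((j + 1 : ℝ) * (z - t) ^ j)) volume α β := by
      apply Continuous.intervalIntegrable; continuity
    have hint2 : IntervalIntegrable (iteratedDeriv (j + 1) f) volume α β :=
      ((hcont (j + 1) hjn).mono hsub).intervalIntegrable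
    have hIBP := integral_mul_deriv_eq_deriv_mul hW hV hint1 hint2
    rw [hIBP]
    have hrew : ∫ t in α..β, -((j + 1 : ℝ) * (z - t) ^ j) * iteratedDeriv j f t
        = -((j + 1 : ℝ) * ∫ t in α..β, (z - t) ^ j * iteratedDeriv j f t) := by
      rw [← intervalIntegral.integral_const_mul, ← intervalIntegral.integral_neg]
      congr 1; ext t; ring
    rw [hrew, ih hj z α β hsub]
    conv_rhs => rw [Finset.sum_range_succ]
    have hfac : ((j + 1).factorial : ℝ) = (j + 1 : ℝ) * (j.factorial : ℝ) := by
      rw [Nat.factorial_succ]; push_cast; ring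
    have hfacne : ((j + 1).factorial : ℝ) ≠ 0 := by positivity
    field_simp [hfac]
    rw [hfac]
    ring

lemma fink (hs : IsOpen s)
    (hder : ∀ k, k < n → ∀ t ∈ s, HasDerivAt (iteratedDeriv k f) (iteratedDeriv (k + 1) f t) t)
    (hcont : ∀ k, k ≤ n → ContinuousOn (iteratedDeriv k f) s)
    (hn : 1 ≤ n) {α β z : ℝ} (hz : z ∈ Icc α β) (hsub : Icc α β ⊆ s) :
    ((∫ t in α..z, (z - t) ^ (n - 1) * (t - α) * iteratedDeriv n f t) +
        ∫ t in z..β, (z - t) ^ (n - 1) * (t - β) * iteratedDeriv n f t)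
      = ((n - 1).factorial : ℝ) * ((β - α) * f z) +
          ((n - 1).factorial : ℝ) *
            (∑ k ∈ Finset.Icc 1 (n - 1), (((n : ℝ) - k) / (k.factorial : ℝ)) *
              ((z - α) ^ k * iteratedDeriv (k - 1) f α
                - (z - β) ^ k * iteratedDeriv (k - 1) f β))
          - (n.factorial : ℝ) * ∫ t in α..β, f t := by
  obtain ⟨m, rfl⟩ : ∃ m, n = m + 1 := ⟨n - 1, by omega⟩
  simp only [Nat.add_sub_cancel]
  obtain ⟨hz1, hz2⟩ := hz
  have hαβ : α ≤ β := le_trans hz1 hz2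
  have hsub1 : uIcc α z ⊆ s := by
    rw [uIcc_of_le hz1]; exact (Icc_subset_Icc le_rfl hz2).trans hsub
  have hsub2 : uIcc β z ⊆ s := by
    rw [uIcc_of_ge hz2]; exact (Icc_subset_Icc hz1 le_rfl).trans hsub
  have hsub2' : uIcc z β ⊆ s := by rw [uIcc_comm]; exact hsub2
  have hsub3 : uIcc α β ⊆ s := by rw [uIcc_of_le hαβ]; exact hsub
  have hgc : ContinuousOn (iteratedDeriv (m + 1) f) s := hcont (m + 1) le_rfl
  have hA := taylor_int hder hcont m le_rfl α z hsub1
  have hB := taylor_int hder hcont m le_rfl β z hsub2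
  have hI := iclosed hder hcont (m + 1) le_rfl z α β hsub3
  have hC : ∫ t in z..β, (z - t) ^ m * iteratedDeriv (m + 1) f t
      = -((m.factorial : ℝ) * (f z - ∑ i ∈ Finset.range (m + 1),
          iteratedDeriv i f β * (z - β) ^ i / (i.factorial : ℝ))) := by
    rw [intervalIntegral.integral_symm β z, hB]
  have i1 : IntervalIntegrable (fun t => (z - t) ^ (m + 1) * iteratedDeriv (m + 1) f t)
      volume α z :=
    (((continuous_const.sub continuous_id).pow (m + 1)).continuousOn.mul
      (hgc.mono hsub1)).intervalIntegrable
  have i2 : IntervalIntegrable (fun t => (z - t) ^ (m + 1) * iteratedDeriv (m + 1) f t)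
      volume z β :=
    (((continuous_const.sub continuous_id).pow (m + 1)).continuousOn.mul
      (hgc.mono hsub2')).intervalIntegrable
  have i1' : IntervalIntegrable (fun t => (z - t) ^ m * iteratedDeriv (m + 1) f t)
      volume α z :=
    (((continuous_const.sub continuous_id).pow m).continuousOn.mul
      (hgc.mono hsub1)).intervalIntegrable
  have i2' : IntervalIntegrable (fun t => (z - t) ^ m * iteratedDeriv (m + 1) f t)
      volume z β :=
    (((continuous_const.sub continuous_id).pow m).continuousOn.mul
      (hgc.mono hsub2')).intervalIntegrable
  have hsplit := integral_add_adjacent_intervals i1 i2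
  have e1 : (∫ t in α..z, (z - t) ^ m * (t - α) * iteratedDeriv (m + 1) f t)
      = (z - α) * (∫ t in α..z, (z - t) ^ m * iteratedDeriv (m + 1) f t)
        - ∫ t in α..z, (z - t) ^ (m + 1) * iteratedDeriv (m + 1) f t := by
    rw [← intervalIntegral.integral_const_mul,
      ← intervalIntegral.integral_sub (i1'.const_mul _) i1]
    exact intervalIntegral.integral_congr fun t _ => by ring
  have e2 : (∫ t in z..β, (z - t) ^ m * (t - β) * iteratedDeriv (m + 1) f t)
      = (z - β) * (∫ t in z..β, (z - t) ^ m * iteratedDeriv (m + 1) f t)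
        - ∫ t in z..β, (z - t) ^ (m + 1) * iteratedDeriv (m + 1) f t := by
    rw [← intervalIntegral.integral_const_mul,
      ← intervalIntegral.integral_sub (i2'.const_mul _) i2]
    exact intervalIntegral.integral_congr fun t _ => by ring
  have hfacm : (((m + 1).factorial : ℕ) : ℝ) = ((m : ℝ) + 1) * (m.factorial : ℝ) := by
    rw [Nat.factorial_succ]; push_cast; ring
  have hsum : (z - β) * (∑ i ∈ Finset.range (m + 1),
        iteratedDeriv i f β * (z - β) ^ i / (i.factorial : ℝ))
      - (z - α) * (∑ i ∈ Finset.range (m + 1),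
        iteratedDeriv i f α * (z - α) ^ i / (i.factorial : ℝ))
      - ((m : ℝ) + 1) * (∑ i ∈ Finset.range (m + 1),
        ((z - β) ^ (i + 1) * iteratedDeriv i f β - (z - α) ^ (i + 1) * iteratedDeriv i f α)
          / ((i + 1).factorial : ℝ))
      = ∑ k ∈ Finset.Icc 1 m, (((m : ℝ) + 1 - k) / (k.factorial : ℝ)) *
          ((z - α) ^ k * iteratedDeriv (k - 1) f α - (z - β) ^ k * iteratedDeriv (k - 1) f β) := by
    rw [Finset.mul_sum, Finset.mul_sum, Finset.mul_sum, ← Finset.sum_sub_distrib,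
      ← Finset.sum_sub_distrib]
    have hstep : (∑ k ∈ Finset.Icc 1 m, (((m : ℝ) + 1 - k) / (k.factorial : ℝ)) *
          ((z - α) ^ k * iteratedDeriv (k - 1) f α - (z - β) ^ k * iteratedDeriv (k - 1) f β))
        = ∑ k ∈ Finset.Icc 1 (m + 1), (((m : ℝ) + 1 - k) / (k.factorial : ℝ)) *
          ((z - α) ^ k * iteratedDeriv (k - 1) f α - (z - β) ^ k * iteratedDeriv (k - 1) f β) := by
      rw [Finset.sum_Icc_succ_top (by omega)]
      have h0 : ((m : ℝ) + 1 - ((m + 1 : ℕ) : ℝ)) = 0 := by push_cast; ring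
      rw [h0, zero_div, zero_mul, add_zero]
    rw [hstep, ← Finset.Ico_add_one_right_eq_Icc, Finset.sum_Ico_eq_sum_range]
    refine Finset.sum_congr (by norm_num) fun i _ => ?_
    have h2 : 1 + i = i + 1 := by omega
    rw [h2, Nat.add_sub_cancel]
    have hfaci : (((i + 1).factorial : ℕ) : ℝ) = ((i : ℝ) + 1) * (i.factorial : ℝ) := by
      rw [Nat.factorial_succ]; push_cast; ring
    have hne : (i.factorial : ℝ) ≠ 0 := by positivity
    have hne' : ((i : ℝ) + 1) ≠ 0 := by positivity
    rw [hfaci]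
    push_cast
    field_simp
    ring
  rw [e1, e2, hA, hC]
  rw [hfacm] at hI ⊢
  push_cast
  linear_combination (m.factorial : ℝ) * hsum - hsplit - hI



lemma pieceB {e1 qq : ℝ} (he1 : 0 ≤ e1) (hqq : 0 < qq) {α β : ℝ} (hαβ : α ≤ β) :
    ∫ t in α..β, (t - α) ^ e1 * (β - t) ^ qq
      = (β - α) ^ (e1 + qq + 1) * ∫ s in (0:ℝ)..1, s ^ e1 * (1 - s) ^ qq := by
  rcases eq_or_lt_of_le hαβ with h | h
  · subst h
    rw [intervalIntegral.integral_same, sub_self, Real.zero_rpow (by positivity), zero_mul]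
  · have hc : (0:ℝ) < β - α := by linarith
    have hsub := intervalIntegral.integral_comp_mul_add (a := (0:ℝ)) (b := 1)
      (fun t => (t - α) ^ e1 * (β - t) ^ qq) (ne_of_gt hc) α
    rw [show (β - α) * 0 + α = α by ring, show (β - α) * 1 + α = β by ring] at hsub
    have key : (∫ s in (0:ℝ)..1, ((β - α) * s + α - α) ^ e1 * (β - ((β - α) * s + α)) ^ qq)
        = ((β - α) ^ e1 * (β - α) ^ qq) * ∫ s in (0:ℝ)..1, s ^ e1 * (1 - s) ^ qq := by
      rw [← intervalIntegral.integral_const_mul]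
      refine intervalIntegral.integral_congr fun u hu => ?_
      rw [uIcc_of_le zero_le_one] at hu
      rw [show (β - α) * u + α - α = (β - α) * u by ring,
        show β - ((β - α) * u + α) = (β - α) * (1 - u) by ring,
        Real.mul_rpow hc.le hu.1, Real.mul_rpow hc.le (by linarith [hu.2])]
      ring
    have hL : (∫ t in α..β, (t - α) ^ e1 * (β - t) ^ qq)
        = (β - α) * ∫ s in (0:ℝ)..1, ((β - α) * s + α - α) ^ e1 * (β - ((β - α) * s + α)) ^ qq := by
      rw [hsub, smul_eq_mul, ← mul_assoc, mul_inv_cancel₀ (ne_of_gt hc), one_mul]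
    rw [hL, key, Real.rpow_add hc, Real.rpow_add hc, Real.rpow_one]
    ring

lemma pieceA {e1 qq : ℝ} (he1 : 0 ≤ e1) (hqq : 0 < qq) {α β : ℝ} (hαβ : α ≤ β) :
    ∫ t in α..β, (β - t) ^ e1 * (t - α) ^ qq
      = (β - α) ^ (e1 + qq + 1) * ∫ s in (0:ℝ)..1, s ^ e1 * (1 - s) ^ qq := by
  have h1 : (∫ t in α..β, (β - t) ^ e1 * (t - α) ^ qq)
      = ∫ t in α..β, (α + β - t - α) ^ e1 * (β - (α + β - t)) ^ qq :=
    intervalIntegral.integral_congr fun t _ => by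
      rw [show α + β - t - α = β - t by ring, show β - (α + β - t) = t - α by ring]
  have h2 := intervalIntegral.integral_comp_sub_left (a := α) (b := β)
    (fun t => (t - α) ^ e1 * (β - t) ^ qq) (α + β)
  rw [show α + β - β = α by ring, show α + β - α = β by ring] at h2
  rw [h1, h2, pieceB he1 hqq hαβ]

/-- congruence on `Ioc` for interval integrals. -/
lemma piece_eq {F G : ℝ → ℝ} {u v : ℝ} (huv : u ≤ v)
    (hcongr : ∀ t ∈ Ioc u v, F t = G t) (hG : IntervalIntegrable G volume u v) :
    IntervalIntegrable F volume u v ∧ (∫ t in u..v, F t) = ∫ t in u..v, G t := by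
  rw [intervalIntegrable_iff_integrableOn_Ioc_of_le huv] at hG ⊢
  constructor
  · exact hG.congr_fun (fun t ht => (hcongr t ht).symm) measurableSet_Ioc
  · rw [intervalIntegral.integral_of_le huv, intervalIntegral.integral_of_le huv]
    exact setIntegral_congr_fun measurableSet_Ioc hcongr

end GS

open GS

set_option maxHeartbeats 1600000 in
theorem stmt_2 (n : ℕ) (hn : 1 ≤ n) (p q : ℝ) (hp : 1 < p) (hq : q = p / (p - 1))
    (a b c d : ℝ) (hab : a < b)
    (hca : c < a) (hbd : b < d) (f : ℝ → ℝ)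
    (hf : ContDiffOn ℝ (n : ℕ∞) f (Set.Ioo c d))
    (hAC : AbsCont (iteratedDeriv n f) a b)
    (hLp : IntegrableOn (fun t => |iteratedDeriv n f t| ^ p) (Set.Icc a b))
    (x : ℝ) (hx : x ∈ Set.Icc a ((a + b) / 2)) :
    |(1 / (n : ℝ)) *
          ((f x + f (a + b - x)) / 2 + ∑ k ∈ Finset.Icc 1 (n - 1), Gterm f n a b x k)
        - (1 / (b - a)) * ∫ y in a..b, f y|
      ≤ ((2 : ℝ) ^ (1 / q) / ((n.factorial : ℝ) * (b - a))) *
          ((x - a) ^ ((n : ℝ) * q + 1) + ((a + b) / 2 - x) ^ ((n : ℝ) * q + 1)) ^ (1 / q) *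
          (betaR (((n : ℝ) - 1) * q + 1) (q + 1)) ^ (1 / q) *
          (∫ t in a..b, |iteratedDeriv n f t| ^ p) ^ (1 / p) := by
  -- basic notation
  have hpq : p.HolderConjugate q := hq ▸ Real.HolderConjugate.conjExponent hp
  have hp0 : (0:ℝ) < p := lt_trans one_pos hp
  have hq1 : (1:ℝ) < q := hpq.symm.lt
  have hq0 : (0:ℝ) < q := lt_trans one_pos hq1
  obtain ⟨hax, hxM⟩ := hx
  set M : ℝ := (a + b) / 2 with hM
  set Y : ℝ := a + b - x with hY
  set gn : ℝ → ℝ := iteratedDeriv n f with hgndef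
  have hMY : M ≤ Y := by rw [hM, hY]; linarith
  have hYb : Y ≤ b := by rw [hY]; linarith
  have haM : a < M := by rw [hM]; linarith
  have hMb : M < b := by rw [hM]; linarith
  have hIcc : Icc a b ⊆ Ioo c d := fun t ht => ⟨lt_of_lt_of_le hca ht.1, lt_of_le_of_lt ht.2 hbd⟩
  obtain ⟨hder, hcont⟩ := derivs isOpen_Ioo hf
  have hgnc : ContinuousOn gn (Ioo c d) := hcont n le_rfl
  have hgnc' : ContinuousOn gn (Icc a b) := hgnc.mono hIcc
  -- the kernel
  set K : ℝ → ℝ := fun t => if t ≤ x then (x - t) ^ (n-1) * (t - a)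
    else if t ≤ M then (x - t) ^ (n-1) * (t - M)
    else if t ≤ Y then (Y - t) ^ (n-1) * (t - M)
    else (Y - t) ^ (n-1) * (t - b) with hK
  -- the two Fink identities
  have hfink1 := fink isOpen_Ioo hder hcont hn (α := a) (β := M) (z := x) ⟨hax, hxM⟩
    ((Icc_subset_Icc le_rfl hMb.le).trans hIcc)
  have hfink2 := fink isOpen_Ioo hder hcont hn (α := M) (β := b) (z := Y) ⟨hMY, hYb⟩
    ((Icc_subset_Icc haM.le le_rfl).trans hIcc)
  rw [← hgndef] at hfink1 hfink2
  -- split ∫ K·gn into the four pieces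
  have hsub1 : uIcc a x ⊆ Icc a b := by
    rw [uIcc_of_le hax]; exact Icc_subset_Icc le_rfl (le_trans hxM hMb.le)
  have hsub2 : uIcc x M ⊆ Icc a b := by
    rw [uIcc_of_le hxM]; exact Icc_subset_Icc hax hMb.le
  have hsub3 : uIcc M Y ⊆ Icc a b := by
    rw [uIcc_of_le hMY]; exact Icc_subset_Icc haM.le hYb
  have hsub4 : uIcc Y b ⊆ Icc a b := by
    rw [uIcc_of_le hYb]; exact Icc_subset_Icc (le_trans haM.le hMY) le_rfl
  have cpoly : ∀ z : ℝ, Continuous fun t : ℝ => (z - t) ^ (n-1) :=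
    fun z => (continuous_const.sub continuous_id).pow _
  have hGi1 : IntervalIntegrable (fun t => (x - t) ^ (n-1) * (t - a) * gn t) volume a x :=
    ((((cpoly x).mul (continuous_id.sub continuous_const)).continuousOn).mul
      (hgnc'.mono hsub1)).intervalIntegrable
  have hGi2 : IntervalIntegrable (fun t => (x - t) ^ (n-1) * (t - M) * gn t) volume x M :=
    ((((cpoly x).mul (continuous_id.sub continuous_const)).continuousOn).mul
      (hgnc'.mono hsub2)).intervalIntegrable
  have hGi3 : IntervalIntegrable (fun t => (Y - t) ^ (n-1) * (t - M) * gn t) volume M Y :=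
    ((((cpoly Y).mul (continuous_id.sub continuous_const)).continuousOn).mul
      (hgnc'.mono hsub3)).intervalIntegrable
  have hGi4 : IntervalIntegrable (fun t => (Y - t) ^ (n-1) * (t - b) * gn t) volume Y b :=
    ((((cpoly Y).mul (continuous_id.sub continuous_const)).continuousOn).mul
      (hgnc'.mono hsub4)).intervalIntegrable
  have hp1 := piece_eq hax (F := fun t => K t * gn t) (fun t ht => by
    simp only [hK]; rw [if_pos ht.2]) hGi1
  have hp2 := piece_eq hxM (F := fun t => K t * gn t) (fun t ht => by
    simp only [hK]; rw [if_neg (not_le.mpr ht.1), if_pos ht.2]) hGi2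
  have hp3 := piece_eq hMY (F := fun t => K t * gn t) (fun t ht => by
    simp only [hK]
    rw [if_neg (not_le.mpr (lt_of_le_of_lt hxM ht.1)), if_neg (not_le.mpr ht.1),
      if_pos ht.2]) hGi3
  have hp4 := piece_eq hYb (F := fun t => K t * gn t) (fun t ht => by
    simp only [hK]
    rw [if_neg (not_le.mpr (lt_of_le_of_lt (le_trans hxM hMY) ht.1)),
      if_neg (not_le.mpr (lt_of_le_of_lt hMY ht.1)), if_neg (not_le.mpr ht.1)]) hGi4
  have hKeq : (∫ t in a..b, K t * gn t)
      = (∫ t in a..x, (x - t) ^ (n-1) * (t - a) * gn t)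
        + (∫ t in x..M, (x - t) ^ (n-1) * (t - M) * gn t)
        + (∫ t in M..Y, (Y - t) ^ (n-1) * (t - M) * gn t)
        + ∫ t in Y..b, (Y - t) ^ (n-1) * (t - b) * gn t := by
    rw [← integral_add_adjacent_intervals ((hp1.1.trans hp2.1).trans hp3.1) hp4.1,
      ← integral_add_adjacent_intervals (hp1.1.trans hp2.1) hp3.1,
      ← integral_add_adjacent_intervals hp1.1 hp2.1,
      hp1.2, hp2.2, hp3.2, hp4.2]
  -- relation between Gterm sum and the Fink boundary sums
  have hba : (0:ℝ) < b - a := by linarith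
  have hGsum : (b - a) * (∑ k ∈ Finset.Icc 1 (n - 1), Gterm f n a b x k)
      = (∑ k ∈ Finset.Icc 1 (n - 1), (((n : ℝ) - k) / (k.factorial : ℝ)) *
          ((x - a) ^ k * iteratedDeriv (k - 1) f a
            - (x - M) ^ k * iteratedDeriv (k - 1) f M))
        + ∑ k ∈ Finset.Icc 1 (n - 1), (((n : ℝ) - k) / (k.factorial : ℝ)) *
          ((Y - M) ^ k * iteratedDeriv (k - 1) f M
            - (Y - b) ^ k * iteratedDeriv (k - 1) f b) := by
    rw [Finset.mul_sum, ← Finset.sum_add_distrib]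
    refine Finset.sum_congr rfl fun k _ => ?_
    simp only [Gterm]
    rw [← hM]
    rw [show x - M = -(M - x) by ring,
      show Y - M = M - x by rw [hY, hM]; ring,
      show Y - b = -(x - a) by rw [hY]; ring,
      show (-(M - x) : ℝ) ^ k = (-1) ^ k * (M - x) ^ k from neg_pow _ _,
      show (-(x - a) : ℝ) ^ k = (-1) ^ k * (x - a) ^ k from neg_pow _ _,
      show ((-1 : ℝ)) ^ (k + 1) = (-1) ^ k * (-1) from pow_succ _ _]
    have hkf : ((k.factorial : ℕ) : ℝ) ≠ 0 := by positivity
    generalize (x - a) ^ k = A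
    generalize (M - x) ^ k = B
    generalize ((-1 : ℝ)) ^ k = E
    field_simp
    ring
  -- the value identity
  have hsplitf : (∫ t in a..M, f t) + (∫ t in M..b, f t) = ∫ t in a..b, f t := by
    have h0 : ContinuousOn f (Icc a b) := by
      have := hcont 0 (by omega)
      rw [iteratedDeriv_zero] at this
      exact this.mono hIcc
    exact integral_add_adjacent_intervals
      ((h0.mono (by rw [uIcc_of_le haM.le]; exact Icc_subset_Icc le_rfl hMb.le)).intervalIntegrable)
      ((h0.mono (by rw [uIcc_of_le hMb.le]; exact Icc_subset_Icc haM.le le_rfl)).intervalIntegrable)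
  have hnfac : ((n.factorial : ℕ) : ℝ) = (n : ℝ) * (((n-1).factorial : ℕ) : ℝ) := by
    obtain ⟨m, rfl⟩ : ∃ m, n = m + 1 := ⟨n - 1, by omega⟩
    simp only [Nat.add_sub_cancel, Nat.factorial_succ]
    push_cast; ring
  have hnne : (n:ℝ) ≠ 0 := by positivity
  have hJ : (∫ t in a..x, (x - t) ^ (n-1) * (t - a) * gn t)
        + (∫ t in x..M, (x - t) ^ (n-1) * (t - M) * gn t)
        + (∫ t in M..Y, (Y - t) ^ (n-1) * (t - M) * gn t)
        + (∫ t in Y..b, (Y - t) ^ (n-1) * (t - b) * gn t)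
      = (((n-1).factorial : ℝ) * (b - a)) * ((f x + f Y) / 2)
        + ((n-1).factorial : ℝ) * ((b - a) * (∑ k ∈ Finset.Icc 1 (n - 1), Gterm f n a b x k))
        - (n.factorial : ℝ) * ∫ t in a..b, f t := by
    rw [hGsum]
    have hMa : M - a = (b - a) / 2 := by rw [hM]; ring
    have hbM : b - M = (b - a) / 2 := by rw [hM]; ring
    linear_combination hfink1 + hfink2 - (n.factorial : ℝ) * hsplitf
      + (((n-1).factorial : ℝ) * (f x)) * hMa + (((n-1).factorial : ℝ) * (f Y)) * hbM
  have hDpos : (0:ℝ) < (n.factorial : ℝ) * (b - a) := by positivity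
  have hval : (1 / (n : ℝ)) *
          ((f x + f Y) / 2 + ∑ k ∈ Finset.Icc 1 (n - 1), Gterm f n a b x k)
        - (1 / (b - a)) * ∫ y in a..b, f y
      = (∫ t in a..b, K t * gn t) / ((n.factorial : ℝ) * (b - a)) := by
    rw [eq_div_iff (ne_of_gt hDpos), hKeq, hJ, hnfac]
    field_simp
  -- measure-theoretic setup for Hölder
  set μ : Measure ℝ := volume.restrict (Ioc a b) with hμ
  have hKmeas : Measurable K := by
    refine Measurable.ite (measurableSet_le measurable_id measurable_const)
      (((cpoly x).mul (continuous_id.sub continuous_const)).measurable) ?_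
    refine Measurable.ite (measurableSet_le measurable_id measurable_const)
      (((cpoly x).mul (continuous_id.sub continuous_const)).measurable) ?_
    exact Measurable.ite (measurableSet_le measurable_id measurable_const)
      (((cpoly Y).mul (continuous_id.sub continuous_const)).measurable)
      (((cpoly Y).mul (continuous_id.sub continuous_const)).measurable)
  have hgnae : AEStronglyMeasurable gn μ :=
    (hgnc.mono ((Ioc_subset_Icc_self).trans hIcc)).aestronglyMeasurable measurableSet_Ioc
  have hbound : ∀ᵐ t ∂μ, ‖|K t|‖ ≤ (b - a) ^ (n-1) * (b - a) := by
    refine ae_restrict_of_forall_mem measurableSet_Ioc fun t ht => ?_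
    rw [Real.norm_eq_abs, abs_abs]
    have hb1 : ∀ u v : ℝ, |u| ≤ b - a → |v| ≤ b - a →
        |u ^ (n-1) * v| ≤ (b - a) ^ (n-1) * (b - a) := fun u v hu hv => by
      rw [abs_mul, abs_pow]
      exact mul_le_mul (pow_le_pow_left₀ (abs_nonneg u) hu _) hv (abs_nonneg v) (by positivity)
    have ht1 : a < t := ht.1
    have ht2 : t ≤ b := ht.2
    have hxb : |x - t| ≤ b - a := by
      rw [abs_le]; constructor <;> [linarith [hxM, hMb.le]; linarith]
    have hYb' : |Y - t| ≤ b - a := by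
      rw [abs_le]; constructor <;> [linarith [hYb]; linarith [hMY, haM.le]]
    simp only [hK]
    split_ifs with h1 h2 h3
    · exact hb1 _ _ hxb (by rw [abs_le]; constructor <;> linarith)
    · exact hb1 _ _ hxb (by rw [abs_le]; constructor <;> linarith [haM.le, hMb.le])
    · exact hb1 _ _ hYb' (by rw [abs_le]; constructor <;> linarith [haM.le, hMb.le])
    · exact hb1 _ _ hYb' (by rw [abs_le]; constructor <;> linarith)
  have hMK : MemLp (fun t => |K t|) (ENNReal.ofReal q) μ :=
    MemLp.of_bound hKmeas.abs.aestronglyMeasurable _ hbound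
  have hMg : MemLp (fun t => |gn t|) (ENNReal.ofReal p) μ := by
    have hone : ENNReal.ofReal p ≠ 0 := by
      simp only [ne_eq, ENNReal.ofReal_eq_zero, not_le]; exact hp0
    have htop : ENNReal.ofReal p ≠ ⊤ := ENNReal.ofReal_ne_top
    have hi : Integrable (fun t => ‖gn t‖ ^ p) μ := by
      have := hLp.mono_set Ioc_subset_Icc_self
      simpa [Real.norm_eq_abs, hμ] using this.integrable
    have h1 : MemLp gn (ENNReal.ofReal p) μ := by
      refine (memLp_norm_rpow_iff hgnae hone htop).mp ?_
      rw [ENNReal.div_self hone htop, ENNReal.toReal_ofReal hp0.le]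
      exact memLp_one_iff_integrable.mpr hi
    simpa [Real.norm_eq_abs] using h1.norm
  have hHolder : (∫ t, |K t| * |gn t| ∂μ)
      ≤ (∫ t, |K t| ^ q ∂μ) ^ (1/q) * (∫ t, |gn t| ^ p ∂μ) ^ (1/p) :=
    integral_mul_le_Lp_mul_Lq_of_nonneg hpq.symm
      (Filter.Eventually.of_forall fun t => abs_nonneg _)
      (Filter.Eventually.of_forall fun t => abs_nonneg _) hMK hMg
  -- computation of the kernel q-integral
  have hn1 : (1:ℝ) ≤ (n:ℝ) := by exact_mod_cast hn
  have he1 : (0:ℝ) ≤ ((n:ℝ) - 1) * q := by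
    have h2 : (0:ℝ) ≤ (n:ℝ) - 1 := by linarith
    positivity
  have hcast : ((n - 1 : ℕ) : ℝ) = (n : ℝ) - 1 := by
    rw [Nat.cast_sub hn]; norm_num
  have habs1 : ∀ z w t : ℝ, t ≤ z → w ≤ t → |(z - t) ^ (n-1) * (t - w)| ^ q
      = (z - t) ^ (((n:ℝ) - 1) * q) * (t - w) ^ q := by
    intro z w t h1 h2
    rw [abs_mul, abs_pow, abs_of_nonneg (by linarith : (0:ℝ) ≤ z - t),
      abs_of_nonneg (by linarith : (0:ℝ) ≤ t - w),
      Real.mul_rpow (pow_nonneg (by linarith) _) (by linarith),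
      ← Real.rpow_natCast (z - t) (n-1), ← Real.rpow_mul (by linarith : (0:ℝ) ≤ z - t), hcast]
  have habs2 : ∀ z w t : ℝ, z ≤ t → t ≤ w → |(z - t) ^ (n-1) * (t - w)| ^ q
      = (t - z) ^ (((n:ℝ) - 1) * q) * (w - t) ^ q := by
    intro z w t h1 h2
    rw [abs_mul, abs_pow, abs_of_nonpos (by linarith : z - t ≤ 0),
      abs_of_nonpos (by linarith : t - w ≤ 0), neg_sub, neg_sub,
      Real.mul_rpow (pow_nonneg (by linarith) _) (by linarith),
      ← Real.rpow_natCast (t - z) (n-1), ← Real.rpow_mul (by linarith : (0:ℝ) ≤ t - z), hcast]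
  have hcontq : ∀ z w : ℝ, Continuous fun t : ℝ => (z - t) ^ (((n:ℝ) - 1) * q) * (t - w) ^ q := by
    intro z w
    exact ((continuous_const.sub continuous_id).rpow_const fun t => Or.inr he1).mul
      ((continuous_id.sub continuous_const).rpow_const fun t => Or.inr hq0.le)
  have hcontq' : ∀ z w : ℝ, Continuous fun t : ℝ => (t - z) ^ (((n:ℝ) - 1) * q) * (w - t) ^ q := by
    intro z w
    exact ((continuous_id.sub continuous_const).rpow_const fun t => Or.inr he1).mul
      ((continuous_const.sub continuous_id).rpow_const fun t => Or.inr hq0.le)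
  have hq1p := piece_eq hax (F := fun t => |K t| ^ q)
    (G := fun t => (x - t) ^ (((n:ℝ) - 1) * q) * (t - a) ^ q)
    (fun t ht => by simp only [hK]; rw [if_pos ht.2]; exact habs1 x a t ht.2 ht.1.le)
    ((hcontq x a).continuousOn.intervalIntegrable)
  have hq2p := piece_eq hxM (F := fun t => |K t| ^ q)
    (G := fun t => (t - x) ^ (((n:ℝ) - 1) * q) * (M - t) ^ q)
    (fun t ht => by
      simp only [hK]; rw [if_neg (not_le.mpr ht.1), if_pos ht.2]
      exact habs2 x M t ht.1.le ht.2)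
    ((hcontq' x M).continuousOn.intervalIntegrable)
  have hq3p := piece_eq hMY (F := fun t => |K t| ^ q)
    (G := fun t => (Y - t) ^ (((n:ℝ) - 1) * q) * (t - M) ^ q)
    (fun t ht => by
      simp only [hK]
      rw [if_neg (not_le.mpr (lt_of_le_of_lt hxM ht.1)), if_neg (not_le.mpr ht.1),
        if_pos ht.2]
      exact habs1 Y M t ht.2 ht.1.le)
    ((hcontq Y M).continuousOn.intervalIntegrable)
  have hq4p := piece_eq hYb (F := fun t => |K t| ^ q)
    (G := fun t => (t - Y) ^ (((n:ℝ) - 1) * q) * (b - t) ^ q)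
    (fun t ht => by
      simp only [hK]
      rw [if_neg (not_le.mpr (lt_of_le_of_lt (le_trans hxM hMY) ht.1)),
        if_neg (not_le.mpr (lt_of_le_of_lt hMY ht.1)), if_neg (not_le.mpr ht.1)]
      exact habs2 Y b t ht.1.le ht.2)
    ((hcontq' Y b).continuousOn.intervalIntegrable)
  have hKq : (∫ t in a..b, |K t| ^ q)
      = 2 * ((x - a) ^ ((n:ℝ) * q + 1) + (M - x) ^ ((n:ℝ) * q + 1))
        * ∫ s in (0:ℝ)..1, s ^ (((n:ℝ) - 1) * q) * (1 - s) ^ q := by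
    rw [← integral_add_adjacent_intervals ((hq1p.1.trans hq2p.1).trans hq3p.1) hq4p.1,
      ← integral_add_adjacent_intervals (hq1p.1.trans hq2p.1) hq3p.1,
      ← integral_add_adjacent_intervals hq1p.1 hq2p.1,
      hq1p.2, hq2p.2, hq3p.2, hq4p.2,
      pieceA he1 hq0 hax, pieceB he1 hq0 hxM, pieceA he1 hq0 hMY, pieceB he1 hq0 hYb,
      show Y - M = M - x by rw [hY, hM]; ring,
      show b - Y = x - a by rw [hY]; ring,
      show ((n:ℝ) - 1) * q + q + 1 = (n:ℝ) * q + 1 by ring]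
    ring
  have hBc0 : (0:ℝ) ≤ ∫ s in (0:ℝ)..1, s ^ (((n:ℝ) - 1) * q) * (1 - s) ^ q :=
    intervalIntegral.integral_nonneg zero_le_one fun s hs =>
      mul_nonneg (Real.rpow_nonneg hs.1 _) (Real.rpow_nonneg (by linarith [hs.2]) _)
  have hbetaR : betaR (((n : ℝ) - 1) * q + 1) (q + 1)
      = ∫ s in (0:ℝ)..1, s ^ (((n:ℝ) - 1) * q) * (1 - s) ^ q := by
    simp only [betaR, add_sub_cancel_right]
  have hX0 : (0:ℝ) ≤ (x - a) ^ ((n:ℝ) * q + 1) := Real.rpow_nonneg (by linarith) _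
  have hZ0 : (0:ℝ) ≤ (M - x) ^ ((n:ℝ) * q + 1) := Real.rpow_nonneg (by linarith) _
  -- final chain
  calc |(1 / (n : ℝ)) *
          ((f x + f Y) / 2 + ∑ k ∈ Finset.Icc 1 (n - 1), Gterm f n a b x k)
        - (1 / (b - a)) * ∫ y in a..b, f y|
      = |∫ t in a..b, K t * gn t| / ((n.factorial : ℝ) * (b - a)) := by
        rw [hval, abs_div, abs_of_pos hDpos]
    _ ≤ (∫ t in a..b, |K t * gn t|) / ((n.factorial : ℝ) * (b - a)) := by
        exact (div_le_div_iff_of_pos_right hDpos).mpr (intervalIntegral.abs_integral_le_integral_abs hab.le)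
    _ = (∫ t, |K t| * |gn t| ∂μ) / ((n.factorial : ℝ) * (b - a)) := by
        rw [show (fun t => |K t * gn t|) = fun t => |K t| * |gn t| from
          funext fun t => abs_mul _ _]
        rw [intervalIntegral.integral_of_le hab.le, hμ]
    _ ≤ ((∫ t, |K t| ^ q ∂μ) ^ (1/q) * (∫ t, |gn t| ^ p ∂μ) ^ (1/p))
          / ((n.factorial : ℝ) * (b - a)) := by
        exact (div_le_div_iff_of_pos_right hDpos).mpr hHolder
    _ = ((2 : ℝ) ^ (1 / q) / ((n.factorial : ℝ) * (b - a))) *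
          ((x - a) ^ ((n : ℝ) * q + 1) + (M - x) ^ ((n : ℝ) * q + 1)) ^ (1 / q) *
          (betaR (((n : ℝ) - 1) * q + 1) (q + 1)) ^ (1 / q) *
          (∫ t in a..b, |gn t| ^ p) ^ (1 / p) := by
        rw [show (∫ t, |K t| ^ q ∂μ) = ∫ t in a..b, |K t| ^ q by
            rw [intervalIntegral.integral_of_le hab.le, hμ],
          show (∫ t, |gn t| ^ p ∂μ) = ∫ t in a..b, |gn t| ^ p by
            rw [intervalIntegral.integral_of_le hab.le, hμ],
          hKq, hbetaR,
          Real.mul_rpow (by positivity) hBc0,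
          Real.mul_rpow (by norm_num) (add_nonneg hX0 hZ0)]
        ring
end

section
/- Let n ≥ 1 and let f be n-times differentiable on an open interval containing [a,b] with f^(n) absolutely continuous and essentially bounded on [a,b]. Then for every x ∈ [a,(a+b)/2], | (1/n)·( (f(x)+f(a+b−x))/2 + Σ_{k=1}^{n−1} G_k(x) ) − (1/(b−a))·∫_a^b f(y) dy | ≤ (2/(n!·(b−a)·n·(n+1)))·( (x−a)^{n+1} + ((a+b)/2 − x)^{n+1} ) · ‖f^(n)‖_{L^∞[a,b]}. -/
open MeasureTheory Set

/-- The essential supremum of `|g|` on `[a,b]` (the `L^∞[a,b]` norm). -/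
noncomputable def essSupAbs (g : ℝ → ℝ) (a b : ℝ) : ℝ :=
  essSup (fun t => |g t|) (MeasureTheory.volume.restrict (Set.Icc a b))

open intervalIntegral


/-- On an open set, `iteratedDerivWithin` agrees with `iteratedDeriv`. -/
lemma iteratedDerivWithin_of_isOpen' {f : ℝ → ℝ} {s : Set ℝ} (n : ℕ) (hs : IsOpen s) :
    Set.EqOn (iteratedDerivWithin n f s) (iteratedDeriv n f) s := by
  intro t ht
  rw [iteratedDerivWithin_eq_iteratedFDerivWithin, iteratedDeriv_eq_iteratedFDeriv,
    iteratedFDerivWithin_of_isOpen n hs ht]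

lemma cont_of_contDiffOn {f : ℝ → ℝ} {c d : ℝ} {n : ℕ}
    (hf : ContDiffOn ℝ (n : ℕ∞) f (Set.Ioo c d)) {j : ℕ} (hj : j ≤ n) :
    ContinuousOn (iteratedDeriv j f) (Set.Ioo c d) := by
  have h := hf.continuousOn_iteratedDerivWithin (m := j)
    (by exact_mod_cast Nat.cast_le.2 hj) isOpen_Ioo.uniqueDiffOn
  exact h.congr (fun t ht => (iteratedDerivWithin_of_isOpen' j isOpen_Ioo ht).symm)

lemma deriv_of_contDiffOn {f : ℝ → ℝ} {c d : ℝ} {n : ℕ}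
    (hf : ContDiffOn ℝ (n : ℕ∞) f (Set.Ioo c d)) {j : ℕ} (hj : j < n) :
    ∀ t ∈ Set.Ioo c d, HasDerivAt (iteratedDeriv j f) (iteratedDeriv (j + 1) f t) t := by
  intro t ht
  have hd : DifferentiableOn ℝ (iteratedDerivWithin j f (Set.Ioo c d)) (Set.Ioo c d) :=
    hf.differentiableOn_iteratedDerivWithin (by exact_mod_cast Nat.cast_lt.2 hj)
      isOpen_Ioo.uniqueDiffOn
  have h1 : DifferentiableAt ℝ (iteratedDerivWithin j f (Set.Ioo c d)) t :=
    (hd t ht).differentiableAt (isOpen_Ioo.mem_nhds ht)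
  have h2 : iteratedDerivWithin j f (Set.Ioo c d) =ᶠ[nhds t] iteratedDeriv j f :=
    Filter.eventuallyEq_of_mem (isOpen_Ioo.mem_nhds ht)
      (iteratedDerivWithin_of_isOpen' j isOpen_Ioo)
  have h3 : DifferentiableAt ℝ (iteratedDeriv j f) t := h1.congr_of_eventuallyEq h2.symm
  rw [iteratedDeriv_succ]
  exact h3.hasDerivAt

/-- Iterated integration by parts for `(t-γ)^m` against the `(m+i)`-th member of a
derivative chain `F`. -/
lemma ibp_gen (F : ℕ → ℝ → ℝ) (c d γ : ℝ) :
    ∀ (m i : ℕ) (α β : ℝ), Set.uIcc α β ⊆ Set.Ioo c d →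
    (∀ j < m + i, ∀ t ∈ Set.Ioo c d, HasDerivAt (F j) (F (j + 1) t) t) →
    (∀ j ≤ m + i, ContinuousOn (F j) (Set.Ioo c d)) →
    (∫ t in α..β, (t - γ) ^ m * F (m + i) t) =
      (∑ j ∈ Finset.range m, (-1 : ℝ) ^ j * (m.descFactorial j : ℝ) *
        ((β - γ) ^ (m - j) * F (m + i - 1 - j) β - (α - γ) ^ (m - j) * F (m + i - 1 - j) α))
      + (-1 : ℝ) ^ m * (m.factorial : ℝ) * ∫ t in α..β, F i t := by
  intro m
  induction m with
  | zero => intro i α β hsub hd hc; simp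
  | succ m ih =>
    intro i α β hsub hd hc
    have hkey : m + 1 + i = m + i + 1 := by omega
    have hFcont : ContinuousOn (F (m + i + 1)) (Set.uIcc α β) :=
      (hc (m + 1 + i) le_rfl).mono hsub |>.congr (by rw [hkey]; exact fun t _ => rfl)
    have h1 : (∫ t in α..β, (t - γ) ^ (m + 1) * F (m + 1 + i) t)
        = (β - γ) ^ (m + 1) * F (m + i) β - (α - γ) ^ (m + 1) * F (m + i) α
          - ∫ t in α..β, ((m + 1 : ℝ) * (t - γ) ^ m) * F (m + i) t := by
      rw [hkey]
      apply intervalIntegral.integral_mul_deriv_eq_deriv_mul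
      · intro t _
        have h := ((hasDerivAt_id t).sub_const γ).fun_pow (m + 1)
        simpa using h
      · intro t ht
        exact hd (m + i) (by omega) t (hsub ht)
      · exact ((continuous_const.mul ((continuous_id.sub continuous_const).pow m)).intervalIntegrable _ _)
      · exact hFcont.intervalIntegrable
    rw [h1]
    have h2 : (∫ t in α..β, ((m + 1 : ℝ) * (t - γ) ^ m) * F (m + i) t)
        = (m + 1 : ℝ) * ∫ t in α..β, (t - γ) ^ m * F (m + i) t := by
      rw [← intervalIntegral.integral_const_mul]
      congr 1; ext t; ring
    rw [h2, ih i α β hsub (fun j hj => hd j (by omega)) (fun j hj => hc j (by omega))]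
    rw [Finset.sum_range_succ' (fun j => (-1 : ℝ) ^ j * ((m+1).descFactorial j : ℝ) *
        ((β - γ) ^ (m + 1 - j) * F (m + 1 + i - 1 - j) β
          - (α - γ) ^ (m + 1 - j) * F (m + 1 + i - 1 - j) α)) m]
    have h3 : ∑ j ∈ Finset.range m, (-1 : ℝ) ^ (j + 1) * ((m+1).descFactorial (j+1) : ℝ) *
        ((β - γ) ^ (m + 1 - (j+1)) * F (m + 1 + i - 1 - (j+1)) β
          - (α - γ) ^ (m + 1 - (j+1)) * F (m + 1 + i - 1 - (j+1)) α)
        = -((m : ℝ) + 1) * ∑ j ∈ Finset.range m, (-1 : ℝ) ^ j * (m.descFactorial j : ℝ) *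
          ((β - γ) ^ (m - j) * F (m + i - 1 - j) β - (α - γ) ^ (m - j) * F (m + i - 1 - j) α) := by
      rw [Finset.mul_sum]
      apply Finset.sum_congr rfl
      intro j hj
      have e1 : m + 1 - (j + 1) = m - j := by omega
      have e2 : m + 1 + i - 1 - (j + 1) = m + i - 1 - j := by omega
      rw [e1, e2, Nat.succ_descFactorial_succ]
      push_cast
      ring
    rw [h3]
    simp only [Nat.sub_zero, Nat.descFactorial_zero, Nat.add_sub_cancel, pow_zero, one_mul,
      Nat.factorial_succ]
    have : m + 1 + i - 1 = m + i := by omega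
    rw [this]
    push_cast
    ring


lemma descFac_mul_fac {m j : ℕ} (hj : j ≤ m) :
    (m.descFactorial j) * (m - j).factorial = m.factorial := by
  rw [Nat.descFactorial_eq_factorial_mul_choose]
  rw [← Nat.choose_mul_factorial_mul_factorial hj]
  ring

lemma dF_succ_sub (m j : ℕ) (hj : j ≤ m) :
    ((m+1).descFactorial j : ℝ) - (m.descFactorial j : ℝ)
      = (j : ℝ) * (m.factorial : ℝ) / (((m - j) + 1).factorial : ℝ) := by
  have h1 : ((m+1).descFactorial j) * ((m + 1 - j).factorial) = (m+1).factorial :=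
    descFac_mul_fac (hj.trans (Nat.le_succ m))
  have h2 : (m.descFactorial j) * ((m - j).factorial) = m.factorial := descFac_mul_fac hj
  have e : m + 1 - j = (m - j) + 1 := by omega
  rw [e] at h1
  have h1' : ((m+1).descFactorial j : ℝ) * (((m - j) + 1).factorial : ℝ)
      = ((m+1).factorial : ℝ) := by exact_mod_cast congrArg (Nat.cast (R := ℝ)) h1
  have h2' : (m.descFactorial j : ℝ) * ((m - j).factorial : ℝ) = (m.factorial : ℝ) := by
    exact_mod_cast congrArg (Nat.cast (R := ℝ)) h2
  have hfs : (((m - j) + 1).factorial : ℝ) = ((m - j : ℕ) + 1 : ℝ) * ((m - j).factorial : ℝ) := by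
    rw [Nat.factorial_succ]; push_cast; ring
  have hfacpos : (0:ℝ) < ((m - j).factorial : ℝ) := by exact_mod_cast (m - j).factorial_pos
  have hfacpos1 : (0:ℝ) < (((m - j) + 1).factorial : ℝ) := by
    exact_mod_cast ((m - j) + 1).factorial_pos
  have hcast : ((m - j : ℕ) : ℝ) = (m : ℝ) - (j : ℝ) := by
    push_cast [Nat.cast_sub hj]; ring
  have hfact1 : (((m+1)).factorial : ℝ) = ((m:ℝ)+1) * (m.factorial : ℝ) := by
    rw [Nat.factorial_succ]; push_cast; ring
  field_simp
  nlinarith [h1', h2', hfs, hcast, hfact1, mul_pos hfacpos hfacpos1]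

/-- Closed form for the basic panel integral `∫ (t-α)(t-β)^{n-1} f^{(n)}`. -/
lemma panel (F : ℕ → ℝ → ℝ) (c d : ℝ) (n : ℕ) (hn : 1 ≤ n) (α β : ℝ)
    (hsub : Set.uIcc α β ⊆ Set.Ioo c d)
    (hd : ∀ j < n, ∀ t ∈ Set.Ioo c d, HasDerivAt (F j) (F (j + 1) t) t)
    (hc : ∀ j ≤ n, ContinuousOn (F j) (Set.Ioo c d)) :
    (∫ t in α..β, (t - α) * (t - β) ^ (n - 1) * F n t)
      = (-1 : ℝ) ^ (n + 1) * ((n - 1).factorial : ℝ) *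
          ((β - α) * F 0 β + ∑ k ∈ Finset.Icc 1 n,
            (((n : ℝ) - (k : ℝ)) / (k.factorial : ℝ)) * (β - α) ^ k * F (k - 1) α)
        + (-1 : ℝ) ^ n * (n.factorial : ℝ) * ∫ t in α..β, F 0 t := by
  obtain ⟨m, rfl⟩ : ∃ m, n = m + 1 := ⟨n - 1, by omega⟩
  simp only [Nat.add_sub_cancel]
  -- integrability facts
  have hFc : ContinuousOn (F (m + 1)) (Set.uIcc α β) := (hc (m + 1) le_rfl).mono hsub
  have int1 : IntervalIntegrable (fun t => (t - β) ^ (m + 1) * F (m + 1) t) volume α β := by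
    apply ContinuousOn.intervalIntegrable
    exact (((continuous_id.sub continuous_const).pow (m + 1)).continuousOn).mul hFc
  have int2 : IntervalIntegrable (fun t => (t - β) ^ m * F (m + 1) t) volume α β := by
    apply ContinuousOn.intervalIntegrable
    exact (((continuous_id.sub continuous_const).pow m).continuousOn).mul hFc
  -- split the kernel
  have hsplit : (∫ t in α..β, (t - α) * (t - β) ^ m * F (m + 1) t)
      = (∫ t in α..β, (t - β) ^ (m + 1) * F (m + 1) t)
        + (β - α) * ∫ t in α..β, (t - β) ^ m * F (m + 1) t := by
    rw [← intervalIntegral.integral_const_mul, ← intervalIntegral.integral_add int1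
      (int2.const_mul (β - α))]
    apply intervalIntegral.integral_congr
    intro t _
    ring
  -- the two iterated-IBP identities
  have hA := ibp_gen F c d β (m + 1) 0 α β hsub
    (fun j hj => hd j (by omega)) (fun j hj => hc j (by omega))
  have hB := ibp_gen F c d β m 1 α β hsub
    (fun j hj => hd j (by omega)) (fun j hj => hc j (by omega))
  simp only [Nat.add_zero, Nat.add_sub_cancel] at hA hB
  -- kill the vanishing boundary terms at β
  have hz1 : ∀ j ∈ Finset.range (m + 1), (-1 : ℝ) ^ j * ((m+1).descFactorial j : ℝ) *
      ((β - β) ^ (m + 1 - j) * F (m - j) β - (α - β) ^ (m + 1 - j) * F (m - j) α)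
      = -((-1 : ℝ) ^ j * ((m+1).descFactorial j : ℝ) * ((α - β) ^ (m + 1 - j) * F (m - j) α)) := by
    intro j hj
    rw [sub_self, zero_pow (by simp only [Finset.mem_range] at hj; omega)]
    ring
  have hz2 : ∀ j ∈ Finset.range m, (-1 : ℝ) ^ j * (m.descFactorial j : ℝ) *
      ((β - β) ^ (m - j) * F (m - j) β - (α - β) ^ (m - j) * F (m - j) α)
      = -((-1 : ℝ) ^ j * (m.descFactorial j : ℝ) * ((α - β) ^ (m - j) * F (m - j) α)) := by
    intro j hj
    rw [sub_self, zero_pow (by simp only [Finset.mem_range] at hj; omega)]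
    ring
  rw [Finset.sum_congr rfl hz1] at hA
  rw [Finset.sum_congr rfl hz2] at hB
  -- FTC for the lowest-order term
  have hI1 : (∫ t in α..β, F 1 t) = F 0 β - F 0 α := by
    apply intervalIntegral.integral_eq_sub_of_hasDerivAt
    · intro t ht; exact hd 0 (by omega) t (hsub ht)
    · exact ((hc 1 (by omega)).mono hsub).intervalIntegrable
  rw [hI1] at hB
  rw [hsplit, hA, hB]
  -- transform the RHS sum
  have hR : ∑ k ∈ Finset.Icc 1 (m + 1),
      (((m + 1 : ℕ) : ℝ) - (k : ℝ)) / (k.factorial : ℝ) * (β - α) ^ k * F (k - 1) α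
      = ∑ j ∈ Finset.range (m + 1),
        (((m + 1 : ℕ) : ℝ) - ((1 + (m - j) : ℕ) : ℝ)) / ((1 + (m - j)).factorial : ℝ)
          * (β - α) ^ (1 + (m - j)) * F ((1 + (m - j)) - 1) α := by
    rw [← Finset.Ico_add_one_right_eq_Icc, Finset.sum_Ico_eq_sum_range]
    simp only [Nat.add_sub_cancel]
    exact (Finset.sum_range_reflect (fun i => (((m + 1 : ℕ) : ℝ) - ((1 + i : ℕ) : ℝ))
      / ((1 + i).factorial : ℝ) * (β - α) ^ (1 + i) * F ((1 + i) - 1) α) (m + 1)).symm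
  rw [hR]
  -- peel the last term from both range-(m+1) sums
  rw [Finset.sum_range_succ (fun j => -((-1 : ℝ) ^ j * ((m+1).descFactorial j : ℝ) *
    ((α - β) ^ (m + 1 - j) * F (m - j) α)))]
  rw [Finset.sum_range_succ (fun j => (((m + 1 : ℕ) : ℝ) - ((1 + (m - j) : ℕ) : ℝ))
    / ((1 + (m - j)).factorial : ℝ) * (β - α) ^ (1 + (m - j)) * F ((1 + (m - j)) - 1) α)]
  -- per-term matching for j < m
  have key : ∀ j ∈ Finset.range m,
      -((-1 : ℝ) ^ j * ((m+1).descFactorial j : ℝ) * ((α - β) ^ (m + 1 - j) * F (m - j) α))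
        + (β - α) * (-((-1 : ℝ) ^ j * (m.descFactorial j : ℝ)
            * ((α - β) ^ (m - j) * F (m - j) α)))
      = (-1 : ℝ) ^ (m + 1 + 1) * (m.factorial : ℝ) *
          ((((m + 1 : ℕ) : ℝ) - ((1 + (m - j) : ℕ) : ℝ)) / ((1 + (m - j)).factorial : ℝ)
            * (β - α) ^ (1 + (m - j)) * F ((1 + (m - j)) - 1) α) := by
    intro j hj
    have hjm : j < m := Finset.mem_range.1 hj
    have e1 : m + 1 - j = (m - j) + 1 := by omega
    have e2 : 1 + (m - j) - 1 = m - j := by omega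
    have e3 : 1 + (m - j) = (m - j) + 1 := by omega
    rw [e1, e2, e3]
    have hd1 : (α - β) ^ (m - j + 1) = (-1 : ℝ) ^ (m - j + 1) * (β - α) ^ (m - j + 1) := by
      rw [show α - β = -(β - α) by ring, neg_pow]
    have hd2 : (α - β) ^ (m - j) = (-1 : ℝ) ^ (m - j) * (β - α) ^ (m - j) := by
      rw [show α - β = -(β - α) by ring, neg_pow]
    rw [hd1, hd2]
    have hsign : (-1 : ℝ) ^ (m - j) * (-1 : ℝ) ^ j = (-1 : ℝ) ^ m := by
      rw [← pow_add]; congr 1; omega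
    have hcast : (((m - j : ℕ)) : ℝ) = (m : ℝ) - (j : ℝ) := by
      push_cast [Nat.cast_sub hjm.le]; ring
    have hdf := dF_succ_sub m j hjm.le
    have hfacne : ((((m - j) + 1).factorial : ℝ)) ≠ 0 := by
      exact_mod_cast ((m - j) + 1).factorial_ne_zero
    field_simp at hdf ⊢
    push_cast
    rw [hcast]
    linear_combination ((-1:ℝ)^j * (-1:ℝ)^(m-j) * (β - α)^(m-j+1) * F (m-j) α) * hdf
      + (((j:ℝ) * (m.factorial : ℝ)) * (β - α)^(m-j+1) * F (m-j) α) * hsign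
  have hsum : (∑ j ∈ Finset.range m,
        -((-1 : ℝ) ^ j * ((m+1).descFactorial j : ℝ) * ((α - β) ^ (m + 1 - j) * F (m - j) α)))
      + (β - α) * (∑ j ∈ Finset.range m,
        -((-1 : ℝ) ^ j * (m.descFactorial j : ℝ) * ((α - β) ^ (m - j) * F (m - j) α)))
      = (-1 : ℝ) ^ (m + 1 + 1) * (m.factorial : ℝ) * ∑ j ∈ Finset.range m,
          ((((m + 1 : ℕ) : ℝ) - ((1 + (m - j) : ℕ) : ℝ)) / ((1 + (m - j)).factorial : ℝ)
            * (β - α) ^ (1 + (m - j)) * F ((1 + (m - j)) - 1) α) := by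
    rw [Finset.mul_sum, ← Finset.sum_add_distrib, Finset.sum_congr rfl key, ← Finset.mul_sum]
  have e4 : m + 1 - m = 1 := by omega
  have e5 : m - m = 0 := Nat.sub_self m
  have hdfval : (((m+1).descFactorial m : ℕ) : ℝ) = ((m+1).factorial : ℝ) := by
    have h := descFac_mul_fac (Nat.le_succ m)
    rw [e4, Nat.factorial_one, Nat.mul_one] at h
    exact_mod_cast congrArg (Nat.cast (R := ℝ)) h
  rw [e4, e5]
  simp only [Nat.add_zero, pow_one, Nat.factorial_one, Nat.cast_one, hdfval,
    Nat.add_sub_cancel, Nat.factorial_succ, Nat.factorial_zero]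
  push_cast at hsum ⊢
  linear_combination hsum


lemma int_pow_right (p : ℕ) (α β : ℝ) :
    (∫ t in α..β, (t - α) ^ p) = (β - α) ^ (p + 1) / (p + 1) := by
  rw [intervalIntegral.integral_comp_sub_right (fun u => u ^ p) α, sub_self,
    integral_pow]
  rw [zero_pow (by omega)]
  ring

lemma int_pow_left (p : ℕ) (α β : ℝ) :
    (∫ t in α..β, (β - t) ^ p) = (β - α) ^ (p + 1) / (p + 1) := by
  rw [intervalIntegral.integral_comp_sub_left (fun u => u ^ p) β, sub_self,
    integral_pow]
  rw [zero_pow (by omega)]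
  ring

lemma kint1 (p : ℕ) (α β : ℝ) :
    (∫ t in α..β, (t - α) * (β - t) ^ p)
      = (β - α) ^ (p + 2) / ((p + 1) * (p + 2)) := by
  have h : ∀ t : ℝ, (t - α) * (β - t) ^ p = (β - α) * (β - t) ^ p - (β - t) ^ (p + 1) := by
    intro t; rw [pow_succ]; ring
  have i1 : IntervalIntegrable (fun t => (β - α) * (β - t) ^ p) volume α β :=
    ((continuous_const.mul ((continuous_const.sub continuous_id).pow p)).intervalIntegrable _ _)
  have i2 : IntervalIntegrable (fun t => (β - t) ^ (p + 1)) volume α β :=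
    (((continuous_const.sub continuous_id).pow (p + 1)).intervalIntegrable _ _)
  rw [intervalIntegral.integral_congr (g := fun t => (β - α) * (β - t) ^ p - (β - t) ^ (p + 1))
    (fun t _ => h t), intervalIntegral.integral_sub i1 i2,
    intervalIntegral.integral_const_mul, int_pow_left, int_pow_left]
  have h1 : ((p : ℝ) + 1) ≠ 0 := by positivity
  have h2 : ((p : ℝ) + 1 + 1) ≠ 0 := by positivity
  field_simp
  push_cast
  ring
lemma kint2 (p : ℕ) (α β : ℝ) :
    (∫ t in α..β, (β - t) * (t - α) ^ p)
      = (β - α) ^ (p + 2) / ((p + 1) * (p + 2)) := by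
  have h : ∀ t : ℝ, (β - t) * (t - α) ^ p = (β - α) * (t - α) ^ p - (t - α) ^ (p + 1) := by
    intro t; rw [pow_succ]; ring
  have i1 : IntervalIntegrable (fun t => (β - α) * (t - α) ^ p) volume α β :=
    ((continuous_const.mul ((continuous_id.sub continuous_const).pow p)).intervalIntegrable _ _)
  have i2 : IntervalIntegrable (fun t => (t - α) ^ (p + 1)) volume α β :=
    (((continuous_id.sub continuous_const).pow (p + 1)).intervalIntegrable _ _)
  rw [intervalIntegral.integral_congr (g := fun t => (β - α) * (t - α) ^ p - (t - α) ^ (p + 1))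
    (fun t _ => h t), intervalIntegral.integral_sub i1 i2,
    intervalIntegral.integral_const_mul, int_pow_right, int_pow_right]
  have h1 : ((p : ℝ) + 1) ≠ 0 := by positivity
  have h2 : ((p : ℝ) + 1 + 1) ≠ 0 := by positivity
  field_simp
  push_cast
  ring

set_option maxHeartbeats 1600000 in
theorem stmt_3 (n : ℕ) (hn : 1 ≤ n) (a b c d : ℝ) (hab : a < b)
    (hca : c < a) (hbd : b < d) (f : ℝ → ℝ)
    (hf : ContDiffOn ℝ (n : ℕ∞) f (Set.Ioo c d))
    (hAC : AbsCont (iteratedDeriv n f) a b)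
    (hbdd : ∃ C : ℝ, ∀ᵐ t ∂(MeasureTheory.volume.restrict (Set.Icc a b)),
      |iteratedDeriv n f t| ≤ C)
    (x : ℝ) (hx : x ∈ Set.Icc a ((a + b) / 2)) :
    |(1 / (n : ℝ)) *
          ((f x + f (a + b - x)) / 2 + ∑ k ∈ Finset.Icc 1 (n - 1), Gterm f n a b x k)
        - (1 / (b - a)) * ∫ y in a..b, f y|
      ≤ (2 / ((n.factorial : ℝ) * (b - a) * n * (n + 1))) *
          ((x - a) ^ (n + 1) + ((a + b) / 2 - x) ^ (n + 1)) *
          essSupAbs (iteratedDeriv n f) a b := by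
  obtain ⟨p, rfl⟩ : ∃ p, n = p + 1 := ⟨n - 1, by omega⟩
  simp only [Nat.add_sub_cancel]
  -- basic order facts
  have hax : a ≤ x := hx.1
  have hxm : x ≤ (a + b) / 2 := hx.2
  have hIccsub : Set.Icc a b ⊆ Set.Ioo c d := fun t ht =>
    ⟨lt_of_lt_of_le hca ht.1, lt_of_le_of_lt ht.2 hbd⟩
  have ha' : a ∈ Set.Icc a b := ⟨le_refl a, hab.le⟩
  have hx' : x ∈ Set.Icc a b := ⟨hax, by linarith⟩
  have hm' : (a + b) / 2 ∈ Set.Icc a b := ⟨by linarith, by linarith⟩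
  have hy' : a + b - x ∈ Set.Icc a b := ⟨by linarith, by linarith⟩
  have hb' : b ∈ Set.Icc a b := ⟨hab.le, le_refl b⟩
  have hder : ∀ j < p + 1, ∀ t ∈ Set.Ioo c d,
      HasDerivAt (iteratedDeriv j f) (iteratedDeriv (j + 1) f t) t :=
    fun j hj => deriv_of_contDiffOn hf hj
  have hcont : ∀ j ≤ p + 1, ContinuousOn (iteratedDeriv j f) (Set.Ioo c d) :=
    fun j hj => cont_of_contDiffOn hf hj
  have sub1 : Set.uIcc a x ⊆ Set.Ioo c d := (Set.uIcc_subset_Icc ha' hx').trans hIccsub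
  have sub2 : Set.uIcc ((a + b) / 2) x ⊆ Set.Ioo c d :=
    (Set.uIcc_subset_Icc hm' hx').trans hIccsub
  have sub3 : Set.uIcc ((a + b) / 2) (a + b - x) ⊆ Set.Ioo c d :=
    (Set.uIcc_subset_Icc hm' hy').trans hIccsub
  have sub4 : Set.uIcc b (a + b - x) ⊆ Set.Ioo c d :=
    (Set.uIcc_subset_Icc hb' hy').trans hIccsub
  have P1 := panel (fun j => iteratedDeriv j f) c d (p + 1) hn a x sub1 hder hcont
  have P2 := panel (fun j => iteratedDeriv j f) c d (p + 1) hn ((a + b) / 2) x sub2 hder hcont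
  have P3 := panel (fun j => iteratedDeriv j f) c d (p + 1) hn ((a + b) / 2) (a + b - x)
    sub3 hder hcont
  have P4 := panel (fun j => iteratedDeriv j f) c d (p + 1) hn b (a + b - x) sub4 hder hcont
  simp only [iteratedDeriv_zero, Nat.add_sub_cancel] at P1 P2 P3 P4
  -- integrability of f on subintervals
  have gc0 : ContinuousOn f (Set.Icc a b) := by
    have := (hcont 0 (Nat.zero_le (p + 1))).mono hIccsub
    rwa [iteratedDeriv_zero] at this
  have ii : ∀ {α β : ℝ}, α ∈ Set.Icc a b → β ∈ Set.Icc a b →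
      IntervalIntegrable f volume α β := fun hα hβ =>
    (gc0.mono (Set.uIcc_subset_Icc hα hβ)).intervalIntegrable
  have hadd : (∫ t in a..x, f t) + (∫ t in x..((a + b) / 2), f t)
      + (∫ t in ((a + b) / 2)..(a + b - x), f t) + (∫ t in (a + b - x)..b, f t)
      = ∫ t in a..b, f t := by
    rw [intervalIntegral.integral_add_adjacent_intervals (ii ha' hx') (ii hx' hm'),
      intervalIntegral.integral_add_adjacent_intervals (ii ha' hm') (ii hm' hy'),
      intervalIntegral.integral_add_adjacent_intervals (ii ha' hy') (ii hy' hb')]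
  have hba : (b - a) ≠ 0 := sub_ne_zero.2 hab.ne'
  -- per-term combination of the four sums
  have hcomb : ∀ k ∈ Finset.Icc 1 (p + 1),
      (((p + 1 : ℕ) : ℝ) - (k : ℝ)) / (k.factorial : ℝ) * (x - a) ^ k
          * iteratedDeriv (k - 1) f a
      - (((p + 1 : ℕ) : ℝ) - (k : ℝ)) / (k.factorial : ℝ) * (x - (a + b) / 2) ^ k *
          iteratedDeriv (k - 1) f ((a + b) / 2)
      + (((p + 1 : ℕ) : ℝ) - (k : ℝ)) / (k.factorial : ℝ) * (a + b - x - (a + b) / 2) ^ k *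
          iteratedDeriv (k - 1) f ((a + b) / 2)
      - (((p + 1 : ℕ) : ℝ) - (k : ℝ)) / (k.factorial : ℝ) * (a + b - x - b) ^ k *
          iteratedDeriv (k - 1) f b
      = (b - a) * Gterm f (p + 1) a b x k := by
    intro k hk
    rw [Gterm]
    have e1 : (x - (a + b) / 2 : ℝ) ^ k = (-1 : ℝ) ^ k * ((a + b) / 2 - x) ^ k := by
      rw [show (x - (a + b) / 2 : ℝ) = -((a + b) / 2 - x) by ring, neg_pow]
    have e2 : (a + b - x - (a + b) / 2 : ℝ) ^ k = ((a + b) / 2 - x) ^ k := by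
      congr 1; ring
    have e3 : (a + b - x - b : ℝ) ^ k = (-1 : ℝ) ^ k * (x - a) ^ k := by
      rw [show (a + b - x - b : ℝ) = -(x - a) by ring, neg_pow]
    rw [e1, e2, e3]
    have hkf : (k.factorial : ℝ) ≠ 0 := by exact_mod_cast k.factorial_ne_zero
    field_simp
    ring
  have hS : (∑ k ∈ Finset.Icc 1 (p + 1),
        (((p + 1 : ℕ) : ℝ) - (k : ℝ)) / (k.factorial : ℝ) * (x - a) ^ k
          * iteratedDeriv (k - 1) f a)
      - (∑ k ∈ Finset.Icc 1 (p + 1), (((p + 1 : ℕ) : ℝ) - (k : ℝ)) / (k.factorial : ℝ) *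
          (x - (a + b) / 2) ^ k * iteratedDeriv (k - 1) f ((a + b) / 2))
      + (∑ k ∈ Finset.Icc 1 (p + 1), (((p + 1 : ℕ) : ℝ) - (k : ℝ)) / (k.factorial : ℝ) *
          (a + b - x - (a + b) / 2) ^ k * iteratedDeriv (k - 1) f ((a + b) / 2))
      - (∑ k ∈ Finset.Icc 1 (p + 1), (((p + 1 : ℕ) : ℝ) - (k : ℝ)) / (k.factorial : ℝ) *
          (a + b - x - b) ^ k * iteratedDeriv (k - 1) f b)
      = (b - a) * ∑ k ∈ Finset.Icc 1 (p + 1), Gterm f (p + 1) a b x k := by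
    rw [← Finset.sum_sub_distrib, ← Finset.sum_add_distrib, ← Finset.sum_sub_distrib,
      Finset.mul_sum]
    exact Finset.sum_congr rfl hcomb
  have hdrop : ∑ k ∈ Finset.Icc 1 (p + 1), Gterm f (p + 1) a b x k
      = ∑ k ∈ Finset.Icc 1 p, Gterm f (p + 1) a b x k := by
    rw [Finset.sum_Icc_succ_top (by omega : 1 ≤ p + 1)]
    have hz : Gterm f (p + 1) a b x (p + 1) = 0 := by
      rw [Gterm]
      push_cast
      ring
    rw [hz, add_zero]
  have hfac : (((p + 1).factorial : ℕ) : ℝ) = ((p + 1 : ℕ) : ℝ) * ((p.factorial : ℕ) : ℝ) := by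
    rw [Nat.factorial_succ]; push_cast; ring
  have hnne : ((p + 1 : ℕ) : ℝ) ≠ 0 := by push_cast; positivity
  have hL : (-1 : ℝ) ^ ((p + 1) + 1) * ((p + 1).factorial : ℝ) * (b - a) *
        ((1 / ((p + 1 : ℕ) : ℝ)) * ((f x + f (a + b - x)) / 2
            + ∑ k ∈ Finset.Icc 1 p, Gterm f (p + 1) a b x k)
          - (1 / (b - a)) * ∫ y in a..b, f y)
      = (-1 : ℝ) ^ ((p + 1) + 1) * (p.factorial : ℝ) * (b - a) *
          ((f x + f (a + b - x)) / 2 + ∑ k ∈ Finset.Icc 1 p, Gterm f (p + 1) a b x k)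
        + (-1 : ℝ) ^ (p + 1) * ((p + 1).factorial : ℝ) * ∫ y in a..b, f y := by
    rw [hfac]
    field_simp
    ring
  -- the main identity
  have hIdent :
      (∫ t in a..x, (t - a) * (t - x) ^ p * iteratedDeriv (p + 1) f t)
      - (∫ t in ((a + b) / 2)..x,
          (t - (a + b) / 2) * (t - x) ^ p * iteratedDeriv (p + 1) f t)
      + (∫ t in ((a + b) / 2)..(a + b - x),
          (t - (a + b) / 2) * (t - (a + b - x)) ^ p * iteratedDeriv (p + 1) f t)
      - (∫ t in b..(a + b - x),
          (t - b) * (t - (a + b - x)) ^ p * iteratedDeriv (p + 1) f t)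
      = (-1 : ℝ) ^ ((p + 1) + 1) * ((p + 1).factorial : ℝ) * (b - a) *
        ((1 / ((p + 1 : ℕ) : ℝ)) * ((f x + f (a + b - x)) / 2
            + ∑ k ∈ Finset.Icc 1 p, Gterm f (p + 1) a b x k)
          - (1 / (b - a)) * ∫ y in a..b, f y) := by
    rw [P1, P2, P3, P4, hL]
    have hs2 : (∫ t in ((a + b) / 2)..x, f t) = -∫ t in x..((a + b) / 2), f t :=
      intervalIntegral.integral_symm x ((a + b) / 2)
    have hs4 : (∫ t in b..(a + b - x), f t) = -∫ t in (a + b - x)..b, f t :=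
      intervalIntegral.integral_symm (a + b - x) b
    rw [hs2, hs4]
    linear_combination ((-1 : ℝ) ^ (p + 1) * ((p + 1).factorial : ℝ)) * hadd
      + ((-1 : ℝ) ^ ((p + 1) + 1) * (p.factorial : ℝ)) * hS
      + ((-1 : ℝ) ^ ((p + 1) + 1) * (p.factorial : ℝ) * (b - a)) * hdrop
  -- essential sup bound
  have hMae : ∀ᵐ t ∂(volume.restrict (Set.Icc a b)),
      |iteratedDeriv (p + 1) f t| ≤ essSupAbs (iteratedDeriv (p + 1) f) a b := by
    obtain ⟨C, hC⟩ := hbdd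
    have hbnd : Filter.IsBoundedUnder (· ≤ ·) (ae (volume.restrict (Set.Icc a b)))
        (fun t => |iteratedDeriv (p + 1) f t|) := ⟨C, Filter.eventually_map.2 hC⟩
    simpa [essSupAbs] using ae_le_essSup hbnd
  have hbound : ∀ (α β : ℝ) (K : ℝ → ℝ), α ∈ Set.Icc a b → β ∈ Set.Icc a b → α ≤ β →
      ContinuousOn K (Set.uIcc α β) →
      |∫ t in α..β, K t * iteratedDeriv (p + 1) f t|
        ≤ (∫ t in α..β, |K t|) * essSupAbs (iteratedDeriv (p + 1) f) a b := by
    intro α β K hα hβ hαβ hKc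
    have hgc : ContinuousOn (iteratedDeriv (p + 1) f) (Set.uIcc α β) :=
      (hcont (p + 1) le_rfl).mono ((Set.uIcc_subset_Icc hα hβ).trans hIccsub)
    have hKg : IntervalIntegrable (fun t => K t * iteratedDeriv (p + 1) f t) volume α β :=
      (hKc.mul hgc).intervalIntegrable
    have h1 : |∫ t in α..β, K t * iteratedDeriv (p + 1) f t|
        ≤ ∫ t in α..β, |K t * iteratedDeriv (p + 1) f t| :=
      intervalIntegral.abs_integral_le_integral_abs hαβ
    have hKM : IntervalIntegrable
        (fun t => |K t| * essSupAbs (iteratedDeriv (p + 1) f) a b) volume α β :=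
      (hKc.abs.mul continuousOn_const).intervalIntegrable
    have hae : ∀ᵐ t ∂(volume.restrict (Set.Icc α β)),
        |K t * iteratedDeriv (p + 1) f t|
          ≤ |K t| * essSupAbs (iteratedDeriv (p + 1) f) a b := by
      filter_upwards [ae_restrict_of_ae_restrict_of_subset
        (Set.Icc_subset_Icc hα.1 hβ.2) hMae] with t ht
      rw [abs_mul]
      exact mul_le_mul_of_nonneg_left ht (abs_nonneg _)
    have h2 := intervalIntegral.integral_mono_ae_restrict hαβ hKg.abs hKM hae
    have h3 : (∫ t in α..β, |K t| * essSupAbs (iteratedDeriv (p + 1) f) a b)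
        = (∫ t in α..β, |K t|) * essSupAbs (iteratedDeriv (p + 1) f) a b :=
      intervalIntegral.integral_mul_const _ _
    exact h1.trans (h2.trans_eq h3)
  have hmy : (a + b) / 2 ≤ a + b - x := by linarith
  have hyb : a + b - x ≤ b := by linarith
  -- the four kernel bounds
  have B1 := hbound a x (fun t => (t - a) * (t - x) ^ p) ha' hx' hax
    (((continuous_id.sub continuous_const).mul
      ((continuous_id.sub continuous_const).pow p)).continuousOn)
  have B2 := hbound x ((a + b) / 2) (fun t => (t - (a + b) / 2) * (t - x) ^ p) hx' hm' hxm
    (((continuous_id.sub continuous_const).mul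
      ((continuous_id.sub continuous_const).pow p)).continuousOn)
  have B3 := hbound ((a + b) / 2) (a + b - x)
    (fun t => (t - (a + b) / 2) * (t - (a + b - x)) ^ p) hm' hy' hmy
    (((continuous_id.sub continuous_const).mul
      ((continuous_id.sub continuous_const).pow p)).continuousOn)
  have B4 := hbound (a + b - x) b (fun t => (t - b) * (t - (a + b - x)) ^ p) hy' hb' hyb
    (((continuous_id.sub continuous_const).mul
      ((continuous_id.sub continuous_const).pow p)).continuousOn)
  -- compute the four |K| integrals
  have c1 : (∫ t in a..x, |(t - a) * (t - x) ^ p|)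
      = (x - a) ^ (p + 2) / ((p + 1) * (p + 2)) := by
    rw [← kint1 p a x]
    apply intervalIntegral.integral_congr
    intro t ht
    rw [Set.uIcc_of_le hax] at ht
    simp only [abs_mul, abs_pow]
    rw [abs_of_nonneg (sub_nonneg.2 ht.1), abs_sub_comm t x,
      abs_of_nonneg (sub_nonneg.2 ht.2)]
  have c2 : (∫ t in x..((a + b) / 2), |(t - (a + b) / 2) * (t - x) ^ p|)
      = ((a + b) / 2 - x) ^ (p + 2) / ((p + 1) * (p + 2)) := by
    rw [← kint2 p x ((a + b) / 2)]
    apply intervalIntegral.integral_congr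
    intro t ht
    rw [Set.uIcc_of_le hxm] at ht
    simp only [abs_mul, abs_pow]
    rw [abs_sub_comm t ((a + b) / 2), abs_of_nonneg (sub_nonneg.2 ht.2),
      abs_of_nonneg (sub_nonneg.2 ht.1)]
  have c3 : (∫ t in ((a + b) / 2)..(a + b - x), |(t - (a + b) / 2) * (t - (a + b - x)) ^ p|)
      = ((a + b) / 2 - x) ^ (p + 2) / ((p + 1) * (p + 2)) := by
    rw [show ((a + b) / 2 - x : ℝ) ^ (p + 2) = (a + b - x - (a + b) / 2) ^ (p + 2) by
      ring_nf, ← kint1 p ((a + b) / 2) (a + b - x)]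
    apply intervalIntegral.integral_congr
    intro t ht
    rw [Set.uIcc_of_le hmy] at ht
    simp only [abs_mul, abs_pow]
    rw [abs_of_nonneg (sub_nonneg.2 ht.1), abs_sub_comm t (a + b - x),
      abs_of_nonneg (sub_nonneg.2 ht.2)]
  have c4 : (∫ t in (a + b - x)..b, |(t - b) * (t - (a + b - x)) ^ p|)
      = (x - a) ^ (p + 2) / ((p + 1) * (p + 2)) := by
    rw [show (x - a : ℝ) ^ (p + 2) = (b - (a + b - x)) ^ (p + 2) by ring_nf,
      ← kint2 p (a + b - x) b]
    apply intervalIntegral.integral_congr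
    intro t ht
    rw [Set.uIcc_of_le hyb] at ht
    simp only [abs_mul, abs_pow]
    rw [abs_sub_comm t b, abs_of_nonneg (sub_nonneg.2 ht.2),
      abs_of_nonneg (sub_nonneg.2 ht.1)]
  rw [c1] at B1
  rw [c2] at B2
  rw [c3] at B3
  rw [c4] at B4
  -- reorient pieces 2 and 4
  have r2 : |∫ t in ((a + b) / 2)..x, (t - (a + b) / 2) * (t - x) ^ p
        * iteratedDeriv (p + 1) f t|
      = |∫ t in x..((a + b) / 2), (t - (a + b) / 2) * (t - x) ^ p
        * iteratedDeriv (p + 1) f t| := by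
    rw [intervalIntegral.integral_symm x ((a + b) / 2), abs_neg]
  have r4 : |∫ t in b..(a + b - x), (t - b) * (t - (a + b - x)) ^ p
        * iteratedDeriv (p + 1) f t|
      = |∫ t in (a + b - x)..b, (t - b) * (t - (a + b - x)) ^ p
        * iteratedDeriv (p + 1) f t| := by
    rw [intervalIntegral.integral_symm (a + b - x) b, abs_neg]
  -- assemble
  have hfac0 : (0 : ℝ) < ((p + 1).factorial : ℝ) :=  by exact_mod_cast (p + 1).factorial_pos
  have hfacpos : (0 : ℝ) < ((p + 1).factorial : ℝ) * (b - a) :=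
    mul_pos hfac0 (by linarith)
  have e0 : ((p + 1).factorial : ℝ) * (b - a) *
      |(1 / ((p + 1 : ℕ) : ℝ)) * ((f x + f (a + b - x)) / 2
          + ∑ k ∈ Finset.Icc 1 p, Gterm f (p + 1) a b x k)
        - (1 / (b - a)) * ∫ y in a..b, f y|
      = |(∫ t in a..x, (t - a) * (t - x) ^ p * iteratedDeriv (p + 1) f t)
        - (∫ t in ((a + b) / 2)..x,
            (t - (a + b) / 2) * (t - x) ^ p * iteratedDeriv (p + 1) f t)
        + (∫ t in ((a + b) / 2)..(a + b - x),
            (t - (a + b) / 2) * (t - (a + b - x)) ^ p * iteratedDeriv (p + 1) f t)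
        - (∫ t in b..(a + b - x),
            (t - b) * (t - (a + b - x)) ^ p * iteratedDeriv (p + 1) f t)| := by
    rw [hIdent, abs_mul, abs_mul, abs_mul, abs_pow, abs_neg, abs_one, one_pow, one_mul,
      abs_of_nonneg hfac0.le, abs_of_nonneg (by linarith : (0:ℝ) ≤ b - a)]
  have tri : |(∫ t in a..x, (t - a) * (t - x) ^ p * iteratedDeriv (p + 1) f t)
        - (∫ t in ((a + b) / 2)..x,
            (t - (a + b) / 2) * (t - x) ^ p * iteratedDeriv (p + 1) f t)
        + (∫ t in ((a + b) / 2)..(a + b - x),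
            (t - (a + b) / 2) * (t - (a + b - x)) ^ p * iteratedDeriv (p + 1) f t)
        - (∫ t in b..(a + b - x),
            (t - b) * (t - (a + b - x)) ^ p * iteratedDeriv (p + 1) f t)|
      ≤ |∫ t in a..x, (t - a) * (t - x) ^ p * iteratedDeriv (p + 1) f t|
        + |∫ t in ((a + b) / 2)..x,
            (t - (a + b) / 2) * (t - x) ^ p * iteratedDeriv (p + 1) f t|
        + |∫ t in ((a + b) / 2)..(a + b - x),
            (t - (a + b) / 2) * (t - (a + b - x)) ^ p * iteratedDeriv (p + 1) f t|
        + |∫ t in b..(a + b - x),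
            (t - b) * (t - (a + b - x)) ^ p * iteratedDeriv (p + 1) f t| := by
    exact (abs_sub _ _).trans (add_le_add_left ((abs_add_le _ _).trans
      (add_le_add_left (abs_sub _ _) _)) _)
  have epow : p + 1 + 1 = p + 2 := rfl
  rw [epow]
  rw [← mul_le_mul_iff_right₀ hfacpos]
  have heq : ((p + 1).factorial : ℝ) * (b - a) *
      ((2 / (((p + 1).factorial : ℝ) * (b - a) * ((p + 1 : ℕ) : ℝ) * (((p + 1 : ℕ) : ℝ) + 1)))
        * ((x - a) ^ (p + 2) + ((a + b) / 2 - x) ^ (p + 2))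
        * essSupAbs (iteratedDeriv (p + 1) f) a b)
      = (x - a) ^ (p + 2) / ((p + 1) * (p + 2)) * essSupAbs (iteratedDeriv (p + 1) f) a b
        + ((a + b) / 2 - x) ^ (p + 2) / ((p + 1) * (p + 2))
            * essSupAbs (iteratedDeriv (p + 1) f) a b
        + ((a + b) / 2 - x) ^ (p + 2) / ((p + 1) * (p + 2))
            * essSupAbs (iteratedDeriv (p + 1) f) a b
        + (x - a) ^ (p + 2) / ((p + 1) * (p + 2)) * essSupAbs (iteratedDeriv (p + 1) f) a b
      := by
    have h1 : ((p : ℝ) + 1) ≠ 0 := by positivity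
    have h2 : ((p : ℝ) + 2) ≠ 0 := by positivity
    push_cast
    field_simp
    ring
  rw [heq]
  rw [e0]
  refine tri.trans ?_
  rw [← r2] at B2
  rw [← r4] at B4
  linarith [B1, B2, B3, B4]
end

section
/- Let n ≥ 1 and let f be n-times differentiable on an open interval containing [a,b] with f^(n) absolutely continuous and essentially bounded on [a,b]. Assume that f^{(k−1)}(a) = f^{(k−1)}((a+b)/2) = f^{(k−1)}(b) = 0 for all k = 1,…,n−1. Then for every x ∈ [a,(a+b)/2], | (1/n)·(f(x)+f(a+b−x))/2 − (1/(b−a))·∫_a^b f(y) dy | ≤ (2/(n!·(b−a)·n·(n+1)))·( (x−a)^{n+1} + ((a+b)/2 − x)^{n+1} ) · ‖f^(n)‖_{L^∞[a,b]}. -/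
open MeasureTheory Set intervalIntegral

/-- Beta-type integral 1. -/
lemma beta1 (n : ℕ) (p q : ℝ) :
    ∫ t in p..q, (q - t) ^ n * (t - p)
      = (q - p) ^ (n + 2) / ((n + 1) * (n + 2)) := by
  have hne1 : ((n : ℝ) + 1) ≠ 0 := by positivity
  have hne2 : ((n : ℝ) + 2) ≠ 0 := by positivity
  set F : ℝ → ℝ := fun t =>
    -((q - t) ^ (n + 1) * (t - p)) / (n + 1) - (q - t) ^ (n + 2) / ((n + 1) * (n + 2)) with hF
  have hderiv : ∀ t ∈ Set.uIcc p q, HasDerivAt F ((q - t) ^ n * (t - p)) t := by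
    intro t _
    have hqt : HasDerivAt (fun t : ℝ => q - t) (-1) t := (hasDerivAt_id t).const_sub q
    have h1 : HasDerivAt (fun t : ℝ => (q - t) ^ (n + 1))
        (((n : ℝ) + 1) * (q - t) ^ n * (-1)) t := by
      simpa using hqt.fun_pow (n + 1)
    have h2 : HasDerivAt (fun t : ℝ => (q - t) ^ (n + 2))
        (((n : ℝ) + 2) * (q - t) ^ (n + 1) * (-1)) t := by
      simpa using hqt.fun_pow (n + 2)
    have h3 : HasDerivAt (fun t : ℝ => t - p) 1 t := (hasDerivAt_id t).sub_const p
    have h4 := (h1.mul h3).neg.div_const ((n : ℝ) + 1)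
    have h5 := h2.div_const (((n : ℝ) + 1) * ((n : ℝ) + 2))
    have h6 := h4.sub h5
    have h6' : HasDerivAt F (-((↑n + 1) * (q - t) ^ n * -1 * (t - p) + (q - t) ^ (n + 1) * 1) / (↑n + 1)
        - (↑n + 2) * (q - t) ^ (n + 1) * -1 / ((↑n + 1) * (↑n + 2))) t := h6
    convert h6' using 1
    field_simp
    ring
  have hint : IntervalIntegrable (fun t : ℝ => (q - t) ^ n * (t - p)) volume p q :=
    (((continuous_const.sub continuous_id).pow n).mul
      (continuous_id.sub continuous_const)).intervalIntegrable _ _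
  rw [integral_eq_sub_of_hasDerivAt hderiv hint]
  simp only [hF]
  field_simp
  simp

/-- Beta-type integral 2. -/
lemma beta2 (n : ℕ) (p q : ℝ) :
    ∫ t in p..q, (t - p) ^ n * (q - t)
      = (q - p) ^ (n + 2) / ((n + 1) * (n + 2)) := by
  have h := intervalIntegral.integral_comp_sub_left (a := p) (b := q)
    (fun u : ℝ => (q - u) ^ n * (u - p)) (p + q)
  have h2 : (∫ t in p..q, (q - (p + q - t)) ^ n * ((p + q - t) - p))
      = ∫ u in p..q, (q - u) ^ n * (u - p) := by
    simpa [add_sub_cancel_left, add_sub_cancel_right] using h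
  calc ∫ t in p..q, (t - p) ^ n * (q - t)
      = ∫ t in p..q, (q - (p + q - t)) ^ n * ((p + q - t) - p) := by
        congr 1; ext t; ring_nf
    _ = ∫ u in p..q, (q - u) ^ n * (u - p) := h2
    _ = (q - p) ^ (n + 2) / ((n + 1) * (n + 2)) := beta1 n p q

/-- Repeated integration by parts with vanishing boundary terms. -/
lemma ibp_A (G : ℕ → ℝ → ℝ) (lo hi : ℝ) (k : ℕ)
    (hder : ∀ j, j < k → ∀ t ∈ Set.Icc lo hi, HasDerivAt (G j) (G (j + 1) t) t)
    (hcont : ∀ j, j ≤ k → ContinuousOn (G j) (Set.Icc lo hi))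
    (w p q : ℝ) (hp : p ∈ Set.Icc lo hi) (hq : q ∈ Set.Icc lo hi)
    (hvp : ∀ i, i < k → G i p = 0) (hvq : ∀ i, i < k → G i q = 0) :
    ∫ t in p..q, (t - w) ^ k * G k t
      = (-1 : ℝ) ^ k * k.factorial * ∫ t in p..q, G 0 t := by
  have hsub : Set.uIcc p q ⊆ Set.Icc lo hi := Set.uIcc_subset_Icc hp hq
  induction k with
  | zero => simp
  | succ k ih =>
    have hu : ∀ t ∈ Set.uIcc p q,
        HasDerivAt (fun t : ℝ => (t - w) ^ (k + 1))
          (((k : ℝ) + 1) * (t - w) ^ k) t := by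
      intro t _
      simpa using ((hasDerivAt_id t).sub_const w).fun_pow (k + 1)
    have hv : ∀ t ∈ Set.uIcc p q, HasDerivAt (G k) (G (k + 1) t) t := fun t ht =>
      hder k (Nat.lt_succ_self k) t (hsub ht)
    have hu' : IntervalIntegrable (fun t : ℝ => ((k : ℝ) + 1) * (t - w) ^ k) volume p q := by
      exact (continuous_const.mul
        ((continuous_id.sub continuous_const).pow k)).intervalIntegrable _ _
    have hv' : IntervalIntegrable (G (k + 1)) volume p q :=
      ((hcont (k + 1) le_rfl).mono hsub).intervalIntegrable
    have hibp := integral_mul_deriv_eq_deriv_mul hu hv hu' hv'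
    have hGkp : G k p = 0 := hvp k (Nat.lt_succ_self k)
    have hGkq : G k q = 0 := hvq k (Nat.lt_succ_self k)
    have hmul : ∫ t in p..q, ((k : ℝ) + 1) * (t - w) ^ k * G k t
        = ((k : ℝ) + 1) * ∫ t in p..q, (t - w) ^ k * G k t := by
      rw [← intervalIntegral.integral_const_mul]
      congr 1; ext t; ring
    have ihval := ih (fun j hj => hder j (hj.trans (Nat.lt_succ_self k)))
      (fun j hj => hcont j (hj.trans (Nat.le_succ k)))
      (fun i hi => hvp i (hi.trans (Nat.lt_succ_self k)))
      (fun i hi => hvq i (hi.trans (Nat.lt_succ_self k)))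
    rw [hibp, hGkp, hGkq, hmul, ihval]
    push_cast [Nat.factorial_succ]
    ring

/-- Repeated IBP toward the kernel point `w`. -/
lemma ibp_B (G : ℕ → ℝ → ℝ) (lo hi : ℝ) (k : ℕ)
    (hder : ∀ j, j < k + 1 → ∀ t ∈ Set.Icc lo hi, HasDerivAt (G j) (G (j + 1) t) t)
    (hcont : ∀ j, j ≤ k + 1 → ContinuousOn (G j) (Set.Icc lo hi))
    (w p : ℝ) (hw : w ∈ Set.Icc lo hi) (hp : p ∈ Set.Icc lo hi)
    (hvp : ∀ i, i < k → G i p = 0) :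
    ∫ t in p..w, (t - w) ^ k * G (k + 1) t
      = -(p - w) ^ k * G k p + (-1 : ℝ) ^ k * k.factorial * G 0 w := by
  have hsub : Set.uIcc p w ⊆ Set.Icc lo hi := Set.uIcc_subset_Icc hp hw
  induction k with
  | zero =>
    have hv : ∀ t ∈ Set.uIcc p w, HasDerivAt (G 0) (G 1 t) t := fun t ht =>
      hder 0 (by norm_num) t (hsub ht)
    have hv' : IntervalIntegrable (G 1) volume p w :=
      ((hcont 1 le_rfl).mono hsub).intervalIntegrable
    have := integral_eq_sub_of_hasDerivAt hv hv'
    simp only [pow_zero, one_mul, Nat.factorial_zero, Nat.cast_one]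
    rw [this]; ring
  | succ k ih =>
    have hu : ∀ t ∈ Set.uIcc p w,
        HasDerivAt (fun t : ℝ => (t - w) ^ (k + 1))
          (((k : ℝ) + 1) * (t - w) ^ k) t := by
      intro t _
      simpa using ((hasDerivAt_id t).sub_const w).fun_pow (k + 1)
    have hv : ∀ t ∈ Set.uIcc p w, HasDerivAt (G (k + 1)) (G (k + 2) t) t := fun t ht =>
      hder (k + 1) (Nat.lt_succ_self _) t (hsub ht)
    have hu' : IntervalIntegrable (fun t : ℝ => ((k : ℝ) + 1) * (t - w) ^ k) volume p w := by
      exact (continuous_const.mul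
        ((continuous_id.sub continuous_const).pow k)).intervalIntegrable _ _
    have hv' : IntervalIntegrable (G (k + 2)) volume p w :=
      ((hcont (k + 2) le_rfl).mono hsub).intervalIntegrable
    have hibp := integral_mul_deriv_eq_deriv_mul hu hv hu' hv'
    have hmul : ∫ t in p..w, ((k : ℝ) + 1) * (t - w) ^ k * G (k + 1) t
        = ((k : ℝ) + 1) * ∫ t in p..w, (t - w) ^ k * G (k + 1) t := by
      rw [← intervalIntegral.integral_const_mul]
      congr 1; ext t; ring
    have ihval := ih (fun j hj => hder j (hj.trans (Nat.lt_succ_self _)))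
      (fun j hj => hcont j (hj.trans (Nat.le_succ _)))
      (fun i hi => hvp i (hi.trans (Nat.lt_succ_self k)))
    have hGkp : G k p = 0 := hvp k (Nat.lt_succ_self k)
    rw [hibp, hmul, ihval, hGkp]
    simp only [sub_self, zero_pow, Nat.succ_ne_zero]
    push_cast [Nat.factorial_succ]
    ring

/-- One IBP step followed by `ibp_A`. -/
lemma ibp_top (G : ℕ → ℝ → ℝ) (lo hi : ℝ) (k : ℕ)
    (hder : ∀ j, j < k + 1 → ∀ t ∈ Set.Icc lo hi, HasDerivAt (G j) (G (j + 1) t) t)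
    (hcont : ∀ j, j ≤ k + 1 → ContinuousOn (G j) (Set.Icc lo hi))
    (w p q : ℝ) (hp : p ∈ Set.Icc lo hi) (hq : q ∈ Set.Icc lo hi)
    (hvp : ∀ i, i < k → G i p = 0) (hvq : ∀ i, i < k → G i q = 0) :
    ∫ t in p..q, (t - w) ^ (k + 1) * G (k + 1) t
      = (q - w) ^ (k + 1) * G k q - (p - w) ^ (k + 1) * G k p
        + (-1 : ℝ) ^ (k + 1) * (k + 1).factorial * ∫ t in p..q, G 0 t := by
  have hsub : Set.uIcc p q ⊆ Set.Icc lo hi := Set.uIcc_subset_Icc hp hq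
  have hu : ∀ t ∈ Set.uIcc p q,
      HasDerivAt (fun t : ℝ => (t - w) ^ (k + 1)) (((k : ℝ) + 1) * (t - w) ^ k) t := by
    intro t _
    simpa using ((hasDerivAt_id t).sub_const w).fun_pow (k + 1)
  have hv : ∀ t ∈ Set.uIcc p q, HasDerivAt (G k) (G (k + 1) t) t := fun t ht =>
    hder k (Nat.lt_succ_self _) t (hsub ht)
  have hu' : IntervalIntegrable (fun t : ℝ => ((k : ℝ) + 1) * (t - w) ^ k) volume p q :=
    (continuous_const.mul
      ((continuous_id.sub continuous_const).pow k)).intervalIntegrable _ _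
  have hv' : IntervalIntegrable (G (k + 1)) volume p q :=
    ((hcont (k + 1) le_rfl).mono hsub).intervalIntegrable
  have hibp := integral_mul_deriv_eq_deriv_mul hu hv hu' hv'
  have hmul : ∫ t in p..q, ((k : ℝ) + 1) * (t - w) ^ k * G k t
      = ((k : ℝ) + 1) * ∫ t in p..q, (t - w) ^ k * G k t := by
    rw [← intervalIntegral.integral_const_mul]
    congr 1; ext t; ring
  have hA := ibp_A G lo hi k (fun j hj => hder j (hj.trans (Nat.lt_succ_self _)))
    (fun j hj => hcont j (hj.trans (Nat.le_succ _))) w p q hp hq hvp hvq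
  rw [hibp, hmul, hA]
  push_cast [Nat.factorial_succ]
  ring

/-- iterated derivative within an open interval agrees with the global one -/
lemma iter_eqon (f : ℝ → ℝ) (c d : ℝ) (k : ℕ) :
    Set.EqOn (iteratedDerivWithin k f (Set.Ioo c d)) (iteratedDeriv k f) (Set.Ioo c d) := by
  induction k with
  | zero => intro t _; simp [iteratedDerivWithin_zero, iteratedDeriv_zero]
  | succ k ih =>
    intro t ht
    rw [iteratedDerivWithin_succ, iteratedDeriv_succ,
      derivWithin_congr ih (ih ht), derivWithin_of_isOpen isOpen_Ioo ht]

set_option maxHeartbeats 2000000 in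
theorem stmt_4 (n : ℕ) (hn : 1 ≤ n) (a b c d : ℝ) (hab : a < b)
    (hca : c < a) (hbd : b < d) (f : ℝ → ℝ)
    (hf : ContDiffOn ℝ (n : ℕ∞) f (Set.Ioo c d))
    (hAC : AbsCont (iteratedDeriv n f) a b)
    (hbdd : ∃ C : ℝ, ∀ᵐ t ∂(MeasureTheory.volume.restrict (Set.Icc a b)),
      |iteratedDeriv n f t| ≤ C)
    (hvanish : ∀ k, 1 ≤ k → k ≤ n - 1 →
      iteratedDeriv (k - 1) f a = 0 ∧ iteratedDeriv (k - 1) f ((a + b) / 2) = 0 ∧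
        iteratedDeriv (k - 1) f b = 0)
    (x : ℝ) (hx : x ∈ Set.Icc a ((a + b) / 2)) :
    |(1 / (n : ℝ)) * ((f x + f (a + b - x)) / 2)
        - (1 / (b - a)) * ∫ y in a..b, f y|
      ≤ (2 / ((n.factorial : ℝ) * (b - a) * n * (n + 1))) *
          ((x - a) ^ (n + 1) + ((a + b) / 2 - x) ^ (n + 1)) *
          essSupAbs (iteratedDeriv n f) a b := by
  obtain ⟨N, rfl⟩ : ∃ N, n = N + 1 := ⟨n - 1, (Nat.succ_pred_eq_of_pos hn).symm⟩
  set m : ℝ := (a + b) / 2 with hmdef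
  set y : ℝ := a + b - x with hydef
  obtain ⟨hax, hxm⟩ := hx
  have ham : a ≤ m := by rw [hmdef]; linarith
  have hmb : m ≤ b := by rw [hmdef]; linarith
  have hm2 : m - a = (b - a) / 2 := by rw [hmdef]; ring
  have hbm2 : b - m = (b - a) / 2 := by rw [hmdef]; ring
  have hym : y - m = m - x := by rw [hydef, hmdef]; ring
  have hby : b - y = x - a := by rw [hydef]; ring
  have hmy : m ≤ y := by linarith
  have hyb : y ≤ b := by linarith
  have hxb : x ≤ b := le_trans hxm hmb
  have haI : a ∈ Set.Icc a b := ⟨le_refl a, le_of_lt hab⟩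
  have hbI : b ∈ Set.Icc a b := ⟨le_of_lt hab, le_refl b⟩
  have hxI : x ∈ Set.Icc a b := ⟨hax, hxb⟩
  have hmI : m ∈ Set.Icc a b := ⟨ham, hmb⟩
  have hyI : y ∈ Set.Icc a b := ⟨le_trans ham hmy, hyb⟩
  have hsub : Set.Icc a b ⊆ Set.Ioo c d := fun t ht =>
    ⟨lt_of_lt_of_le hca ht.1, lt_of_le_of_lt ht.2 hbd⟩
  set G : ℕ → ℝ → ℝ := fun k => iteratedDeriv k f with hGdef
  have hg0 : G 0 = f := iteratedDeriv_zero
  have hder : ∀ j, j < N + 1 → ∀ t ∈ Set.Icc a b, HasDerivAt (G j) (G (j + 1) t) t := by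
    intro j hj t ht
    have ht' : t ∈ Set.Ioo c d := hsub ht
    have hdw : DifferentiableWithinAt ℝ (iteratedDerivWithin j f (Set.Ioo c d))
        (Set.Ioo c d) t := by
      refine hf.differentiableOn_iteratedDerivWithin ?_ isOpen_Ioo.uniqueDiffOn t ht'
      exact_mod_cast hj
    have hda : DifferentiableAt ℝ (iteratedDerivWithin j f (Set.Ioo c d)) t :=
      hdw.differentiableAt (isOpen_Ioo.mem_nhds ht')
    have heq : iteratedDerivWithin j f (Set.Ioo c d) =ᶠ[nhds t] iteratedDeriv j f :=
      Filter.eventuallyEq_of_mem (isOpen_Ioo.mem_nhds ht') (iter_eqon f c d j)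
    have hda' : DifferentiableAt ℝ (iteratedDeriv j f) t := hda.congr_of_eventuallyEq heq.symm
    simpa [hGdef, iteratedDeriv_succ] using hda'.hasDerivAt
  have hcont : ∀ j, j ≤ N + 1 → ContinuousOn (G j) (Set.Icc a b) := by
    intro j hj
    have hcw : ContinuousOn (iteratedDerivWithin j f (Set.Ioo c d)) (Set.Ioo c d) :=
      hf.continuousOn_iteratedDerivWithin (by exact_mod_cast hj) isOpen_Ioo.uniqueDiffOn
    exact (hcw.congr (iter_eqon f c d j).symm).mono hsub
  have hvan : ∀ i, i < N → G i a = 0 ∧ G i m = 0 ∧ G i b = 0 := by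
    intro i hi
    have h := hvanish (i + 1) (by omega) (by omega)
    simpa [hGdef] using h
  set M := essSupAbs (iteratedDeriv (N + 1) f) a b with hMdef
  have hae : ∀ᵐ t ∂(volume.restrict (Set.Icc a b)), |G (N + 1) t| ≤ M := by
    obtain ⟨C, hC⟩ := hbdd
    have hb : Filter.IsBoundedUnder (· ≤ ·) (ae (volume.restrict (Set.Icc a b)))
        (fun t => |iteratedDeriv (N + 1) f t|) := ⟨C, by simpa [Filter.eventually_map] using hC⟩
    simpa [hMdef, essSupAbs, hGdef] using ae_le_essSup hb
  have hM0 : 0 ≤ M := by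
    have hres : volume.restrict (Set.Icc a b) ≠ 0 := by
      intro h0
      have h1 : volume.restrict (Set.Icc a b) (Set.Icc a b) = 0 := by rw [h0]; rfl
      rw [Measure.restrict_apply_self] at h1
      rw [Real.volume_Icc] at h1
      have := ENNReal.ofReal_eq_zero.mp h1
      linarith
    have : (ae (volume.restrict (Set.Icc a b))).NeBot := ae_neBot.mpr hres
    obtain ⟨t, ht⟩ := hae.exists
    exact le_trans (abs_nonneg _) ht
  -- integration by parts evaluations
  have hva : ∀ i, i < N → G i a = 0 := fun i hi => (hvan i hi).1
  have hvm : ∀ i, i < N → G i m = 0 := fun i hi => (hvan i hi).2.1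
  have hvb : ∀ i, i < N → G i b = 0 := fun i hi => (hvan i hi).2.2
  have hI1 : ∫ t in a..x, (t - x) ^ N * G (N + 1) t
      = -(a - x) ^ N * G N a + (-1 : ℝ) ^ N * N.factorial * f x := by
    have h := ibp_B G a b N hder hcont x a hxI haI hva
    rwa [hg0] at h
  have hI2 : ∫ t in m..x, (t - x) ^ N * G (N + 1) t
      = -(m - x) ^ N * G N m + (-1 : ℝ) ^ N * N.factorial * f x := by
    have h := ibp_B G a b N hder hcont x m hxI hmI hvm
    rwa [hg0] at h
  have hI3 : ∫ t in m..y, (t - y) ^ N * G (N + 1) t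
      = -(m - y) ^ N * G N m + (-1 : ℝ) ^ N * N.factorial * f y := by
    have h := ibp_B G a b N hder hcont y m hyI hmI hvm
    rwa [hg0] at h
  have hI4 : ∫ t in b..y, (t - y) ^ N * G (N + 1) t
      = -(b - y) ^ N * G N b + (-1 : ℝ) ^ N * N.factorial * f y := by
    have h := ibp_B G a b N hder hcont y b hyI hbI hvb
    rwa [hg0] at h
  have hJ1 : ∫ t in a..m, (t - x) ^ (N + 1) * G (N + 1) t
      = (m - x) ^ N * (m - x) * G N m - (a - x) ^ N * (a - x) * G N a
        + (-1 : ℝ) ^ N * (-1) * (((N : ℝ) + 1) * (N.factorial : ℝ))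
          * ∫ t in a..m, f t := by
    have h := ibp_top G a b N hder hcont x a m haI hmI hva hvm
    rw [hg0] at h
    rw [h]
    push_cast [Nat.factorial_succ]
    ring
  have hJ2 : ∫ t in m..b, (t - y) ^ (N + 1) * G (N + 1) t
      = (b - y) ^ N * (b - y) * G N b - (m - y) ^ N * (m - y) * G N m
        + (-1 : ℝ) ^ N * (-1) * (((N : ℝ) + 1) * (N.factorial : ℝ))
          * ∫ t in m..b, f t := by
    have h := ibp_top G a b N hder hcont y m b hmI hbI hvm hvb
    rw [hg0] at h
    rw [h]
    push_cast [Nat.factorial_succ]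
    ring
  -- integrability helper
  have hcp : ∀ (w : ℝ) (k : ℕ), Continuous (fun t : ℝ => (t - w) ^ k) := fun w k =>
    (continuous_id.sub continuous_const).pow k
  have hIntG : ∀ (g : ℝ → ℝ), Continuous g → ∀ p q : ℝ, p ∈ Set.Icc a b → q ∈ Set.Icc a b →
      IntervalIntegrable (fun t => g t * G (N + 1) t) volume p q := by
    intro g hg p q hp hq
    exact ((hg.continuousOn.mul
      ((hcont (N + 1) le_rfl).mono (Set.uIcc_subset_Icc hp hq)))).intervalIntegrable
  -- splitting the four kernel integrals
  have hS1 : (∫ t in a..x, ((t - x) ^ N * (t - a)) * G (N + 1) t)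
      = (∫ t in a..x, (t - x) ^ (N + 1) * G (N + 1) t)
        + (x - a) * ∫ t in a..x, (t - x) ^ N * G (N + 1) t := by
    rw [integral_congr (g := fun t => (t - x) ^ (N + 1) * G (N + 1) t
        + (x - a) * ((t - x) ^ N * G (N + 1) t)) (fun t _ => by ring)]
    rw [integral_add (hIntG _ (hcp _ _) _ _ haI hxI)
      ((hIntG _ (hcp _ _) _ _ haI hxI).const_mul _), intervalIntegral.integral_const_mul]
  have hS2 : (∫ t in x..m, ((t - x) ^ N * (t - m)) * G (N + 1) t)
      = (∫ t in x..m, (t - x) ^ (N + 1) * G (N + 1) t)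
        + (x - m) * ∫ t in x..m, (t - x) ^ N * G (N + 1) t := by
    rw [integral_congr (g := fun t => (t - x) ^ (N + 1) * G (N + 1) t
        + (x - m) * ((t - x) ^ N * G (N + 1) t)) (fun t _ => by ring)]
    rw [integral_add (hIntG _ (hcp _ _) _ _ hxI hmI)
      ((hIntG _ (hcp _ _) _ _ hxI hmI).const_mul _), intervalIntegral.integral_const_mul]
  have hS3 : (∫ t in m..y, ((t - y) ^ N * (t - m)) * G (N + 1) t)
      = (∫ t in m..y, (t - y) ^ (N + 1) * G (N + 1) t)
        + (y - m) * ∫ t in m..y, (t - y) ^ N * G (N + 1) t := by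
    rw [integral_congr (g := fun t => (t - y) ^ (N + 1) * G (N + 1) t
        + (y - m) * ((t - y) ^ N * G (N + 1) t)) (fun t _ => by ring)]
    rw [integral_add (hIntG _ (hcp _ _) _ _ hmI hyI)
      ((hIntG _ (hcp _ _) _ _ hmI hyI).const_mul _), intervalIntegral.integral_const_mul]
  have hS4 : (∫ t in y..b, ((t - y) ^ N * (t - b)) * G (N + 1) t)
      = (∫ t in y..b, (t - y) ^ (N + 1) * G (N + 1) t)
        + (y - b) * ∫ t in y..b, (t - y) ^ N * G (N + 1) t := by
    rw [integral_congr (g := fun t => (t - y) ^ (N + 1) * G (N + 1) t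
        + (y - b) * ((t - y) ^ N * G (N + 1) t)) (fun t _ => by ring)]
    rw [integral_add (hIntG _ (hcp _ _) _ _ hyI hbI)
      ((hIntG _ (hcp _ _) _ _ hyI hbI).const_mul _), intervalIntegral.integral_const_mul]
  have hA12 : (∫ t in a..x, (t - x) ^ (N + 1) * G (N + 1) t)
      + (∫ t in x..m, (t - x) ^ (N + 1) * G (N + 1) t)
      = ∫ t in a..m, (t - x) ^ (N + 1) * G (N + 1) t :=
    integral_add_adjacent_intervals (hIntG _ (hcp _ _) _ _ haI hxI)
      (hIntG _ (hcp _ _) _ _ hxI hmI)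
  have hB12 : (∫ t in m..y, (t - y) ^ (N + 1) * G (N + 1) t)
      + (∫ t in y..b, (t - y) ^ (N + 1) * G (N + 1) t)
      = ∫ t in m..b, (t - y) ^ (N + 1) * G (N + 1) t :=
    integral_add_adjacent_intervals (hIntG _ (hcp _ _) _ _ hmI hyI)
      (hIntG _ (hcp _ _) _ _ hyI hbI)
  have hswap2 : (∫ t in x..m, (t - x) ^ N * G (N + 1) t)
      = -∫ t in m..x, (t - x) ^ N * G (N + 1) t := integral_symm m x
  have hswap4 : (∫ t in y..b, (t - y) ^ N * G (N + 1) t)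
      = -∫ t in b..y, (t - y) ^ N * G (N + 1) t := integral_symm b y
  have hfc : ContinuousOn f (Set.Icc a b) := by
    have := hcont 0 (Nat.zero_le _); rwa [hg0] at this
  have hfint : ∀ p q : ℝ, p ∈ Set.Icc a b → q ∈ Set.Icc a b →
      IntervalIntegrable f volume p q := fun p q hp hq =>
    (hfc.mono (Set.uIcc_subset_Icc hp hq)).intervalIntegrable
  have hsplit_f : (∫ t in a..b, f t) = (∫ t in a..m, f t) + ∫ t in m..b, f t :=
    (integral_add_adjacent_intervals (hfint a m haI hmI) (hfint m b hmI hbI)).symm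
  -- the key identity
  have hsq : (-1 : ℝ) ^ N * (-1 : ℝ) ^ N = 1 := by
    rw [← pow_add]
    exact Even.neg_one_pow ⟨N, rfl⟩
  have hT : (∫ t in a..x, ((t - x) ^ N * (t - a)) * G (N + 1) t)
      + (∫ t in x..m, ((t - x) ^ N * (t - m)) * G (N + 1) t)
      + (∫ t in m..y, ((t - y) ^ N * (t - m)) * G (N + 1) t)
      + (∫ t in y..b, ((t - y) ^ N * (t - b)) * G (N + 1) t)
      = (-1 : ℝ) ^ N * ((N.factorial : ℝ) * ((b - a) / 2) * (f x + f y)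
          - ((N : ℝ) + 1) * (N.factorial : ℝ) * ∫ t in a..b, f t) := by
    linear_combination hS1 + hS2 + hS3 + hS4 + hA12 + hB12 + hJ1 + hJ2
      + (x - a) * hI1 + (x - m) * hswap2 - (x - m) * hI2
      + (y - m) * hI3 + (y - b) * hswap4 - (y - b) * hI4
      + ((-1 : ℝ) ^ N * (N.factorial : ℝ) * f x) * hm2
      + ((-1 : ℝ) ^ N * (N.factorial : ℝ) * f y) * hbm2
      + ((-1 : ℝ) ^ N * ((N : ℝ) + 1) * (N.factorial : ℝ)) * hsplit_f
  -- bounds on the four pieces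
  have hb1 : |∫ t in a..x, ((t - x) ^ N * (t - a)) * G (N + 1) t|
      ≤ (x - a) ^ (N + 2) / (((N : ℝ) + 1) * ((N : ℝ) + 2)) * M := by
    have hsub1 : Set.uIoc a x ⊆ Set.Icc a b := by
      rw [Set.uIoc_of_le hax]
      exact Set.Ioc_subset_Icc_self.trans (Set.Icc_subset_Icc le_rfl hxb)
    have hae1 : ∀ᵐ t ∂(volume.restrict (Set.uIoc a x)),
        ‖((t - x) ^ N * (t - a)) * G (N + 1) t‖ ≤ (x - t) ^ N * (t - a) * M := by
      filter_upwards [ae_restrict_of_ae_restrict_of_subset hsub1 hae,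
        ae_restrict_mem measurableSet_uIoc] with t h1 h2
      rw [Set.uIoc_of_le hax] at h2
      have htx : t ≤ x := h2.2
      have hta : a ≤ t := le_of_lt h2.1
      have e1 : |t - x| = x - t := by rw [abs_sub_comm]; exact abs_of_nonneg (by linarith)
      calc ‖((t - x) ^ N * (t - a)) * G (N + 1) t‖
          = |t - x| ^ N * |t - a| * |G (N + 1) t| := by
            rw [Real.norm_eq_abs, abs_mul, abs_mul, abs_pow]
        _ = (x - t) ^ N * (t - a) * |G (N + 1) t| := by
            rw [e1, abs_of_nonneg (by linarith : (0:ℝ) ≤ t - a)]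
        _ ≤ (x - t) ^ N * (t - a) * M := by
            apply mul_le_mul_of_nonneg_left h1
            exact mul_nonneg (pow_nonneg (by linarith : (0:ℝ) ≤ x - t) _) (by linarith)
    have hint1 : IntervalIntegrable (fun t => (x - t) ^ N * (t - a) * M) volume a x :=
      ((((continuous_const.sub continuous_id).pow N).mul
        (continuous_id.sub continuous_const)).mul continuous_const).intervalIntegrable _ _
    have h := intervalIntegral.norm_integral_le_abs_of_norm_le hae1 hint1
    rw [intervalIntegral.integral_mul_const, beta1 N a x, abs_of_nonneg (mul_nonneg (div_nonneg
      (pow_nonneg (by linarith : (0:ℝ) ≤ x - a) _) (by positivity)) hM0)] at h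
    exact h
  have hb2 : |∫ t in x..m, ((t - x) ^ N * (t - m)) * G (N + 1) t|
      ≤ (m - x) ^ (N + 2) / (((N : ℝ) + 1) * ((N : ℝ) + 2)) * M := by
    have hsub1 : Set.uIoc x m ⊆ Set.Icc a b := by
      rw [Set.uIoc_of_le hxm]
      exact Set.Ioc_subset_Icc_self.trans (Set.Icc_subset_Icc hax hmb)
    have hae1 : ∀ᵐ t ∂(volume.restrict (Set.uIoc x m)),
        ‖((t - x) ^ N * (t - m)) * G (N + 1) t‖ ≤ (t - x) ^ N * (m - t) * M := by
      filter_upwards [ae_restrict_of_ae_restrict_of_subset hsub1 hae,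
        ae_restrict_mem measurableSet_uIoc] with t h1 h2
      rw [Set.uIoc_of_le hxm] at h2
      have htx : x ≤ t := le_of_lt h2.1
      have htm : t ≤ m := h2.2
      have e1 : |t - m| = m - t := by rw [abs_sub_comm]; exact abs_of_nonneg (by linarith)
      calc ‖((t - x) ^ N * (t - m)) * G (N + 1) t‖
          = |t - x| ^ N * |t - m| * |G (N + 1) t| := by
            rw [Real.norm_eq_abs, abs_mul, abs_mul, abs_pow]
        _ = (t - x) ^ N * (m - t) * |G (N + 1) t| := by
            rw [e1, abs_of_nonneg (by linarith : (0:ℝ) ≤ t - x)]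
        _ ≤ (t - x) ^ N * (m - t) * M := by
            apply mul_le_mul_of_nonneg_left h1
            exact mul_nonneg (pow_nonneg (by linarith : (0:ℝ) ≤ t - x) _) (by linarith)
    have hint1 : IntervalIntegrable (fun t => (t - x) ^ N * (m - t) * M) volume x m :=
      ((((continuous_id.sub continuous_const).pow N).mul
        (continuous_const.sub continuous_id)).mul continuous_const).intervalIntegrable _ _
    have h := intervalIntegral.norm_integral_le_abs_of_norm_le hae1 hint1
    rw [intervalIntegral.integral_mul_const, beta2 N x m, abs_of_nonneg (mul_nonneg (div_nonneg
      (pow_nonneg (by linarith : (0:ℝ) ≤ m - x) _) (by positivity)) hM0)] at h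
    exact h
  have hb3 : |∫ t in m..y, ((t - y) ^ N * (t - m)) * G (N + 1) t|
      ≤ (y - m) ^ (N + 2) / (((N : ℝ) + 1) * ((N : ℝ) + 2)) * M := by
    have hsub1 : Set.uIoc m y ⊆ Set.Icc a b := by
      rw [Set.uIoc_of_le hmy]
      exact Set.Ioc_subset_Icc_self.trans (Set.Icc_subset_Icc ham hyb)
    have hae1 : ∀ᵐ t ∂(volume.restrict (Set.uIoc m y)),
        ‖((t - y) ^ N * (t - m)) * G (N + 1) t‖ ≤ (y - t) ^ N * (t - m) * M := by
      filter_upwards [ae_restrict_of_ae_restrict_of_subset hsub1 hae,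
        ae_restrict_mem measurableSet_uIoc] with t h1 h2
      rw [Set.uIoc_of_le hmy] at h2
      have htm : m ≤ t := le_of_lt h2.1
      have hty : t ≤ y := h2.2
      have e1 : |t - y| = y - t := by rw [abs_sub_comm]; exact abs_of_nonneg (by linarith)
      calc ‖((t - y) ^ N * (t - m)) * G (N + 1) t‖
          = |t - y| ^ N * |t - m| * |G (N + 1) t| := by
            rw [Real.norm_eq_abs, abs_mul, abs_mul, abs_pow]
        _ = (y - t) ^ N * (t - m) * |G (N + 1) t| := by
            rw [e1, abs_of_nonneg (by linarith : (0:ℝ) ≤ t - m)]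
        _ ≤ (y - t) ^ N * (t - m) * M := by
            apply mul_le_mul_of_nonneg_left h1
            exact mul_nonneg (pow_nonneg (by linarith : (0:ℝ) ≤ y - t) _) (by linarith)
    have hint1 : IntervalIntegrable (fun t => (y - t) ^ N * (t - m) * M) volume m y :=
      ((((continuous_const.sub continuous_id).pow N).mul
        (continuous_id.sub continuous_const)).mul continuous_const).intervalIntegrable _ _
    have h := intervalIntegral.norm_integral_le_abs_of_norm_le hae1 hint1
    rw [intervalIntegral.integral_mul_const, beta1 N m y, abs_of_nonneg (mul_nonneg (div_nonneg
      (pow_nonneg (by linarith : (0:ℝ) ≤ y - m) _) (by positivity)) hM0)] at h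
    exact h
  have hb4 : |∫ t in y..b, ((t - y) ^ N * (t - b)) * G (N + 1) t|
      ≤ (b - y) ^ (N + 2) / (((N : ℝ) + 1) * ((N : ℝ) + 2)) * M := by
    have hsub1 : Set.uIoc y b ⊆ Set.Icc a b := by
      rw [Set.uIoc_of_le hyb]
      exact Set.Ioc_subset_Icc_self.trans (Set.Icc_subset_Icc (le_trans ham hmy) le_rfl)
    have hae1 : ∀ᵐ t ∂(volume.restrict (Set.uIoc y b)),
        ‖((t - y) ^ N * (t - b)) * G (N + 1) t‖ ≤ (t - y) ^ N * (b - t) * M := by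
      filter_upwards [ae_restrict_of_ae_restrict_of_subset hsub1 hae,
        ae_restrict_mem measurableSet_uIoc] with t h1 h2
      rw [Set.uIoc_of_le hyb] at h2
      have hty : y ≤ t := le_of_lt h2.1
      have htb : t ≤ b := h2.2
      have e1 : |t - b| = b - t := by rw [abs_sub_comm]; exact abs_of_nonneg (by linarith)
      calc ‖((t - y) ^ N * (t - b)) * G (N + 1) t‖
          = |t - y| ^ N * |t - b| * |G (N + 1) t| := by
            rw [Real.norm_eq_abs, abs_mul, abs_mul, abs_pow]
        _ = (t - y) ^ N * (b - t) * |G (N + 1) t| := by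
            rw [e1, abs_of_nonneg (by linarith : (0:ℝ) ≤ t - y)]
        _ ≤ (t - y) ^ N * (b - t) * M := by
            apply mul_le_mul_of_nonneg_left h1
            exact mul_nonneg (pow_nonneg (by linarith : (0:ℝ) ≤ t - y) _) (by linarith)
    have hint1 : IntervalIntegrable (fun t => (t - y) ^ N * (b - t) * M) volume y b :=
      ((((continuous_id.sub continuous_const).pow N).mul
        (continuous_const.sub continuous_id)).mul continuous_const).intervalIntegrable _ _
    have h := intervalIntegral.norm_integral_le_abs_of_norm_le hae1 hint1
    rw [intervalIntegral.integral_mul_const, beta2 N y b, abs_of_nonneg (mul_nonneg (div_nonneg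
      (pow_nonneg (by linarith : (0:ℝ) ≤ b - y) _) (by positivity)) hM0)] at h
    exact h
  rw [hym] at hb3
  rw [hby] at hb4
  -- summing up
  set T : ℝ := (∫ t in a..x, ((t - x) ^ N * (t - a)) * G (N + 1) t)
      + (∫ t in x..m, ((t - x) ^ N * (t - m)) * G (N + 1) t)
      + (∫ t in m..y, ((t - y) ^ N * (t - m)) * G (N + 1) t)
      + (∫ t in y..b, ((t - y) ^ N * (t - b)) * G (N + 1) t) with hTdef
  have hTabs : |T| ≤ (x - a) ^ (N + 2) / (((N : ℝ) + 1) * ((N : ℝ) + 2)) * M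
      + (m - x) ^ (N + 2) / (((N : ℝ) + 1) * ((N : ℝ) + 2)) * M
      + (m - x) ^ (N + 2) / (((N : ℝ) + 1) * ((N : ℝ) + 2)) * M
      + (x - a) ^ (N + 2) / (((N : ℝ) + 1) * ((N : ℝ) + 2)) * M := by
    have h4 : |T| ≤ |∫ t in a..x, ((t - x) ^ N * (t - a)) * G (N + 1) t|
        + |∫ t in x..m, ((t - x) ^ N * (t - m)) * G (N + 1) t|
        + |∫ t in m..y, ((t - y) ^ N * (t - m)) * G (N + 1) t|
        + |∫ t in y..b, ((t - y) ^ N * (t - b)) * G (N + 1) t| := by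
      rw [hTdef]
      exact le_trans (abs_add_le _ _) (add_le_add (le_trans (abs_add_le _ _)
        (add_le_add (abs_add_le _ _) le_rfl)) le_rfl)
    exact h4.trans (add_le_add (add_le_add (add_le_add hb1 hb2) hb3) hb4)
  -- key scalar identity for the target
  have hne1 : ((N : ℝ) + 1) ≠ 0 := by positivity
  have hne2 : ((N : ℝ) + 2) ≠ 0 := by positivity
  have hnef : (N.factorial : ℝ) ≠ 0 := by exact_mod_cast N.factorial_ne_zero
  have hneba : b - a ≠ 0 := by linarith
  have hT2 : (-1 : ℝ) ^ N * T = (N.factorial : ℝ) * ((b - a) / 2) * (f x + f y)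
      - ((N : ℝ) + 1) * (N.factorial : ℝ) * ∫ t in a..b, f t := by
    rw [hT, ← mul_assoc, hsq, one_mul]
  have hden : (0:ℝ) < ((N : ℝ) + 1) * (N.factorial : ℝ) * (b - a) := by
    have : (0:ℝ) < (N.factorial : ℝ) := by exact_mod_cast N.factorial_pos
    have hba : (0:ℝ) < b - a := by linarith
    positivity
  have htarg : (1 / (((N : ℕ) + 1 : ℕ) : ℝ)) * ((f x + f y) / 2)
      - (1 / (b - a)) * ∫ t in a..b, f t
      = ((-1 : ℝ) ^ N * T) / (((N : ℝ) + 1) * (N.factorial : ℝ) * (b - a)) := by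
    rw [hT2]
    push_cast
    field_simp
  have habs2 : |(1 / (((N : ℕ) + 1 : ℕ) : ℝ)) * ((f x + f y) / 2)
      - (1 / (b - a)) * ∫ t in a..b, f t|
      = |T| / (((N : ℝ) + 1) * (N.factorial : ℝ) * (b - a)) := by
    rw [htarg, abs_div, abs_mul, abs_pow, abs_neg, abs_one, one_pow, one_mul,
      abs_of_pos hden]
  calc |(1 / (((N : ℕ) + 1 : ℕ) : ℝ)) * ((f x + f y) / 2)
      - (1 / (b - a)) * ∫ t in a..b, f t|
      = |T| / (((N : ℝ) + 1) * (N.factorial : ℝ) * (b - a)) := habs2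
    _ ≤ ((x - a) ^ (N + 2) / (((N : ℝ) + 1) * ((N : ℝ) + 2)) * M
          + (m - x) ^ (N + 2) / (((N : ℝ) + 1) * ((N : ℝ) + 2)) * M
          + (m - x) ^ (N + 2) / (((N : ℝ) + 1) * ((N : ℝ) + 2)) * M
          + (x - a) ^ (N + 2) / (((N : ℝ) + 1) * ((N : ℝ) + 2)) * M)
          / (((N : ℝ) + 1) * (N.factorial : ℝ) * (b - a)) :=
        (div_le_div_iff_of_pos_right hden).mpr hTabs
    _ = (2 / (((N + 1).factorial : ℝ) * (b - a) * ((N : ℕ) + 1 : ℕ) * ((((N : ℕ) + 1 : ℕ) : ℝ) + 1))) *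
          ((x - a) ^ (N + 1 + 1) + (m - x) ^ (N + 1 + 1)) * M := by
        push_cast [Nat.factorial_succ]
        field_simp
        ring
end

section
/- Let n ≥ 1, let (P_k)_{k≥0} be a harmonic sequence of polynomials, and let f be n-times differentiable on an open interval containing [a,b] with f^(n) absolutely continuous on [a,b]. Then for every x ∈ [a,(a+b)/2], (1/n)·( (f(x)+f(a+b−x))/2 + Σ_{k=1}^{n−1} ( T_k(x) + F̃_k(a,b) ) ) − (1/(b−a))·∫_a^b f(y) dy = ((−1)^{n−1}/((b−a)·n))·∫_a^b P_{n−1}(t)·S(t,x)·f^(n)(t) dt. -/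
open MeasureTheory Set

/-- A harmonic sequence of polynomials: `P 0 = 1` and `(P (k+1))' = P k`. -/
def HarmonicSeq (P : ℕ → Polynomial ℝ) : Prop :=
  P 0 = 1 ∧ ∀ k, (P (k + 1)).derivative = P k

/-- The term `T_k(x)` of the harmonic-sequence expansion. -/
noncomputable def Tterm (P : ℕ → Polynomial ℝ) (f : ℝ → ℝ) (a b x : ℝ) (k : ℕ) : ℝ :=
  ((-1 : ℝ) ^ k / 2) *
    ((P k).eval x * iteratedDeriv k f x +
      (P k).eval (a + b - x) * iteratedDeriv k f (a + b - x))

/-- The term `F̃_k(a,b)` of the harmonic-sequence expansion. -/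
noncomputable def Ftilde (P : ℕ → Polynomial ℝ) (f : ℝ → ℝ) (n : ℕ) (a b : ℝ) (k : ℕ) : ℝ :=
  ((-1 : ℝ) ^ k * ((n : ℝ) - k) / (b - a)) *
    ((P k).eval a * iteratedDeriv (k - 1) f a - (P k).eval b * iteratedDeriv (k - 1) f b)

section Helpers

lemma myIteratedDerivWithin_of_isOpen {f : ℝ → ℝ} {s : Set ℝ} (m : ℕ) (hs : IsOpen s) :
    EqOn (iteratedDerivWithin m f s) (iteratedDeriv m f) s := fun x hx => by
  simp only [iteratedDerivWithin, iteratedDeriv, iteratedFDerivWithin_of_isOpen m hs hx]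

lemma myContOn {c d : ℝ} {f : ℝ → ℝ} {n : ℕ} (hf : ContDiffOn ℝ (n : ℕ∞) f (Set.Ioo c d))
    (m : ℕ) (hm : m ≤ n) : ContinuousOn (iteratedDeriv m f) (Ioo c d) :=
  (hf.continuousOn_iteratedDerivWithin (by exact_mod_cast hm) isOpen_Ioo.uniqueDiffOn).congr
    (myIteratedDerivWithin_of_isOpen m isOpen_Ioo).symm

lemma myHasDerivAt {c d : ℝ} {f : ℝ → ℝ} {n : ℕ} (hf : ContDiffOn ℝ (n : ℕ∞) f (Set.Ioo c d))
    (m : ℕ) (hm : m < n) {t : ℝ} (ht : t ∈ Ioo c d) :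
    HasDerivAt (iteratedDeriv m f) (iteratedDeriv (m + 1) f t) t := by
  have hdo : DifferentiableOn ℝ (iteratedDerivWithin m f (Ioo c d)) (Ioo c d) :=
    hf.differentiableOn_iteratedDerivWithin (by exact_mod_cast hm) isOpen_Ioo.uniqueDiffOn
  have h1 : DifferentiableAt ℝ (iteratedDerivWithin m f (Ioo c d)) t :=
    hdo.differentiableAt (isOpen_Ioo.mem_nhds ht)
  have heq : iteratedDerivWithin m f (Ioo c d) =ᶠ[nhds t] iteratedDeriv m f :=
    Filter.eventuallyEq_of_mem (isOpen_Ioo.mem_nhds ht)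
      (myIteratedDerivWithin_of_isOpen m isOpen_Ioo)
  have h2 : DifferentiableAt ℝ (iteratedDeriv m f) t := h1.congr_of_eventuallyEq heq.symm
  have := h2.hasDerivAt
  rwa [← iteratedDeriv_succ] at this

lemma myIBP {c d a b : ℝ} {f : ℝ → ℝ} {n : ℕ} (hf : ContDiffOn ℝ (n : ℕ∞) f (Set.Ioo c d))
    (hca : c < a) (hbd : b < d)
    (m : ℕ) (hm : m ≤ n) (q : Polynomial ℝ) {u v : ℝ} (hu : u ∈ Icc a b) (hv : v ∈ Icc a b) :
    ∫ t in u..v, q.eval t * iteratedDeriv m f t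
      = (∑ j ∈ Finset.range m, (-1 : ℝ) ^ j *
          ((Polynomial.derivative^[j] q).eval v * iteratedDeriv (m - 1 - j) f v
            - (Polynomial.derivative^[j] q).eval u * iteratedDeriv (m - 1 - j) f u))
        + (-1 : ℝ) ^ m * ∫ t in u..v, (Polynomial.derivative^[m] q).eval t * f t := by
  have hIccIoo : Icc a b ⊆ Ioo c d := fun t ht => ⟨lt_of_lt_of_le hca ht.1, lt_of_le_of_lt ht.2 hbd⟩
  have huv : (Set.uIcc u v) ⊆ Icc a b := uIcc_subset_Icc hu hv
  induction m generalizing q with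
  | zero => simp [iteratedDeriv_zero]
  | succ m IH =>
    have hm' : m ≤ n := Nat.le_of_succ_le hm
    have hcontq : ContinuousOn (fun t => q.eval t) (Set.uIcc u v) :=
      q.continuousOn_aeval.congr (fun _ _ => rfl)
    have hcontf : ContinuousOn (iteratedDeriv m f) (Set.uIcc u v) :=
      (myContOn hf m hm').mono (huv.trans hIccIoo)
    have hIoosub : Set.Ioo (min u v) (max u v) ⊆ Set.uIcc u v := by
      rw [Set.uIcc]; exact fun s hs => Ioo_subset_Icc_self hs
    have hstep : ∫ t in u..v, q.eval t * iteratedDeriv (m + 1) f t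
        = q.eval v * iteratedDeriv m f v - q.eval u * iteratedDeriv m f u
          - ∫ t in u..v, (Polynomial.derivative q).eval t * iteratedDeriv m f t := by
      apply intervalIntegral.integral_mul_deriv_eq_deriv_mul_of_hasDerivAt hcontq hcontf
        (fun t _ => q.hasDerivAt t)
        (fun t ht => myHasDerivAt hf m (lt_of_lt_of_le (Nat.lt_succ_self m) hm)
          (hIccIoo (huv (hIoosub ht))))
        (((Polynomial.derivative q).continuousOn_aeval.congr (fun _ _ => rfl)).intervalIntegrable)
        (((myContOn hf (m+1) hm).mono (huv.trans hIccIoo)).intervalIntegrable)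
    rw [hstep, IH hm' (Polynomial.derivative q), Finset.sum_range_succ']
    simp only [Function.iterate_succ_apply, Function.iterate_zero_apply, pow_zero, one_mul,
      Nat.succ_sub_one, Nat.sub_zero]
    have hsum : (∑ j ∈ Finset.range m, (-1 : ℝ) ^ (j + 1) *
        ((Polynomial.derivative^[j] (Polynomial.derivative q)).eval v * iteratedDeriv (m - (j+1)) f v
          - (Polynomial.derivative^[j] (Polynomial.derivative q)).eval u * iteratedDeriv (m - (j+1)) f u))
        = -∑ j ∈ Finset.range m, (-1 : ℝ) ^ j *
        ((Polynomial.derivative^[j] (Polynomial.derivative q)).eval v * iteratedDeriv (m - 1 - j) f v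
          - (Polynomial.derivative^[j] (Polynomial.derivative q)).eval u * iteratedDeriv (m - 1 - j) f u) := by
      rw [← Finset.sum_neg_distrib]
      refine Finset.sum_congr rfl (fun j hj => ?_)
      have h1 : m - (j + 1) = m - 1 - j := by omega
      rw [h1]; ring
    rw [hsum]; ring

lemma myIterP {P : ℕ → Polynomial ℝ} (hP : HarmonicSeq P) (j : ℕ) :
    ∀ i, Polynomial.derivative^[j] (P (i + j)) = P i := by
  induction j with
  | zero => intro i; rfl
  | succ j IH =>
    intro i
    have h : i + (j + 1) = (i + 1) + j := by omega
    rw [h, Function.iterate_succ_apply', IH (i + 1), hP.2 i]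

lemma myIterAdd (j : ℕ) : ∀ p q : Polynomial ℝ,
    Polynomial.derivative^[j] (p + q) = Polynomial.derivative^[j] p + Polynomial.derivative^[j] q := by
  induction j with
  | zero => intro p q; rfl
  | succ j IH => intro p q; rw [Function.iterate_succ_apply, Function.iterate_succ_apply,
      Function.iterate_succ_apply, Polynomial.derivative_add, IH]

lemma myIterQ {P : ℕ → Polynomial ℝ} (hP : HarmonicSeq P) (cst : ℝ) (j : ℕ) :
    ∀ k, Polynomial.derivative^[j] ((Polynomial.X - Polynomial.C cst) * P (k + j))
      = (Polynomial.X - Polynomial.C cst) * P k + Polynomial.C (j : ℝ) * P (k + 1) := by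
  induction j with
  | zero => intro k; simp
  | succ j IH =>
    intro k
    have h : k + (j + 1) = (k + j) + 1 := by omega
    rw [h, Function.iterate_succ_apply]
    have hd : Polynomial.derivative ((Polynomial.X - Polynomial.C cst) * P ((k + j) + 1))
        = (Polynomial.X - Polynomial.C cst) * P (k + j) + P ((k + j) + 1) := by
      rw [Polynomial.derivative_mul, hP.2 (k + j)]
      simp [add_comm]
    have h2 : (k + j) + 1 = (k + 1) + j := by omega
    rw [hd, myIterAdd, IH k, h2, myIterP hP j (k + 1)]
    rw [Nat.cast_add, Nat.cast_one, Polynomial.C_add, Polynomial.C_1]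
    ring

lemma myQderiv_lt {P : ℕ → Polynomial ℝ} (hP : HarmonicSeq P) (cst : ℝ) {n j : ℕ} (hj : j < n) :
    Polynomial.derivative^[j] ((Polynomial.X - Polynomial.C cst) * P (n - 1))
      = (Polynomial.X - Polynomial.C cst) * P (n - 1 - j) + Polynomial.C (j : ℝ) * P (n - 1 - j + 1) := by
  have h := myIterQ hP cst j (n - 1 - j)
  have h1 : (n - 1 - j) + j = n - 1 := by omega
  rw [h1] at h
  exact h

lemma myQderiv_top {P : ℕ → Polynomial ℝ} (hP : HarmonicSeq P) (cst : ℝ) {n : ℕ} (hn : 1 ≤ n) :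
    Polynomial.derivative^[n] ((Polynomial.X - Polynomial.C cst) * P (n - 1))
      = Polynomial.C (n : ℝ) := by
  obtain ⟨m, rfl⟩ : ∃ m, n = m + 1 := ⟨n - 1, by omega⟩
  simp only [Nat.add_sub_cancel]
  have h0 := myIterQ hP cst m 0
  rw [Nat.zero_add] at h0
  rw [Function.iterate_succ_apply', h0, hP.1]
  rw [Polynomial.derivative_add, Polynomial.derivative_mul, Polynomial.derivative_mul]
  have h2 : Polynomial.derivative (P (0 + 1)) = P 0 := hP.2 0
  rw [h2, hP.1]
  simp only [Polynomial.derivative_one, Polynomial.derivative_sub, Polynomial.derivative_X,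
    Polynomial.derivative_C, mul_one, mul_zero, one_mul, zero_mul, sub_zero, zero_add, add_zero,
    zero_sub, sub_self]
  rw [Nat.cast_add, Nat.cast_one, Polynomial.C_add, Polynomial.C_1]
  ring

end Helpers

theorem stmt_11 (n : ℕ) (hn : 1 ≤ n) (P : ℕ → Polynomial ℝ) (hP : HarmonicSeq P)
    (a b c d : ℝ) (hab : a < b) (hca : c < a) (hbd : b < d) (f : ℝ → ℝ)
    (hf : ContDiffOn ℝ (n : ℕ∞) f (Set.Ioo c d))
    (hAC : AbsCont (iteratedDeriv n f) a b)
    (x : ℝ) (hx : x ∈ Set.Icc a ((a + b) / 2)) :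
    (1 / (n : ℝ)) *
        ((f x + f (a + b - x)) / 2 +
          ∑ k ∈ Finset.Icc 1 (n - 1), (Tterm P f a b x k + Ftilde P f n a b k))
      - (1 / (b - a)) * ∫ y in a..b, f y
    = ((-1 : ℝ) ^ (n - 1) / ((b - a) * n)) *
        ∫ t in a..b, (P (n - 1)).eval t * Skernel a b x t * iteratedDeriv n f t := by
  clear hAC
  obtain ⟨hax, hxm⟩ := hx
  set y := a + b - x with hy
  have hmid : a ≤ (a + b) / 2 := by linarith
  have hxb : x ≤ b := by linarith
  have hxy : x ≤ y := by rw [hy]; linarith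
  have hyb : y ≤ b := by rw [hy]; linarith
  have hay : a ≤ y := by rw [hy]; linarith
  have hIccIoo : Icc a b ⊆ Ioo c d := fun t ht =>
    ⟨lt_of_lt_of_le hca ht.1, lt_of_le_of_lt ht.2 hbd⟩
  have hxIcc : x ∈ Icc a b := ⟨hax, hxb⟩
  have haIcc : a ∈ Icc a b := ⟨le_refl a, hab.le⟩
  have hbIcc : b ∈ Icc a b := ⟨hab.le, le_refl b⟩
  have hyIcc : y ∈ Icc a b := ⟨hay, hyb⟩
  have hba : b - a ≠ 0 := sub_ne_zero.mpr hab.ne'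
  have hn0 : (n : ℝ) ≠ 0 := Nat.cast_ne_zero.mpr (by omega)
  set F : ℝ → ℝ := fun t => (P (n - 1)).eval t * Skernel a b x t * iteratedDeriv n f t with hF
  set qa : Polynomial ℝ := (Polynomial.X - Polynomial.C a) * P (n - 1) with hqa
  set qm : Polynomial ℝ := (Polynomial.X - Polynomial.C ((a + b) / 2)) * P (n - 1) with hqm
  set qb : Polynomial ℝ := (Polynomial.X - Polynomial.C b) * P (n - 1) with hqb
  -- continuity facts
  have hcn : ContinuousOn (iteratedDeriv n f) (Icc a b) := (myContOn hf n le_rfl).mono hIccIoo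
  have hcf : ContinuousOn f (Icc a b) := (hf.continuousOn).mono hIccIoo
  have hint : ∀ (q : Polynomial ℝ) (u v : ℝ), u ∈ Icc a b → v ∈ Icc a b →
      IntervalIntegrable (fun t => q.eval t * iteratedDeriv n f t) volume u v := by
    intro q u v hu hv
    exact (((q.continuousOn_aeval.congr (fun _ _ => rfl)).mul hcn).mono
      (uIcc_subset_Icc hu hv)).intervalIntegrable
  have hfint : ∀ (u v : ℝ), u ∈ Icc a b → v ∈ Icc a b → IntervalIntegrable f volume u v :=
    fun u v hu hv => (hcf.mono (uIcc_subset_Icc hu hv)).intervalIntegrable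
  -- kernel identifications on the three pieces
  have haeq1 : ∀ᵐ t ∂(volume : Measure ℝ), t ∈ Set.uIoc a x →
      F t = qa.eval t * iteratedDeriv n f t := by
    refine Filter.Eventually.of_forall (fun t ht => ?_)
    rw [uIoc_of_le hax] at ht
    simp only [hF, hqa, Skernel, if_pos ht.2, Polynomial.eval_mul, Polynomial.eval_sub,
      Polynomial.eval_X, Polynomial.eval_C]
    ring
  have haeq2 : ∀ᵐ t ∂(volume : Measure ℝ), t ∈ Set.uIoc x y →
      F t = qm.eval t * iteratedDeriv n f t := by
    have hys : (volume : Measure ℝ) {y} = 0 := measure_singleton y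
    filter_upwards [MeasureTheory.measure_eq_zero_iff_ae_notMem.mp hys] with t hty ht
    rw [uIoc_of_le hxy] at ht
    have ht1 : ¬ t ≤ x := not_le.mpr ht.1
    have ht2 : t < a + b - x := by
      rw [← hy]; exact lt_of_le_of_ne ht.2 (by simpa using hty)
    simp only [hF, hqm, Skernel, if_neg ht1, if_pos ht2, Polynomial.eval_mul, Polynomial.eval_sub,
      Polynomial.eval_X, Polynomial.eval_C]
    ring
  have haeq3 : ∀ᵐ t ∂(volume : Measure ℝ), t ∈ Set.uIoc y b →
      F t = qb.eval t * iteratedDeriv n f t := by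
    refine Filter.Eventually.of_forall (fun t ht => ?_)
    rw [uIoc_of_le hyb] at ht
    have ht1 : ¬ t ≤ x := not_le.mpr (lt_of_le_of_lt hxy ht.1)
    have ht2 : ¬ t < a + b - x := by rw [← hy]; exact not_lt.mpr ht.1.le
    simp only [hF, hqb, Skernel, if_neg ht1, if_neg ht2, Polynomial.eval_mul, Polynomial.eval_sub,
      Polynomial.eval_X, Polynomial.eval_C]
    ring
  -- integrability of F on the pieces
  have hres1 : F =ᵐ[volume.restrict (Set.uIoc a x)] (fun t => qa.eval t * iteratedDeriv n f t) :=
    (ae_restrict_iff' measurableSet_uIoc).mpr haeq1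
  have hres2 : F =ᵐ[volume.restrict (Set.uIoc x y)] (fun t => qm.eval t * iteratedDeriv n f t) :=
    (ae_restrict_iff' measurableSet_uIoc).mpr haeq2
  have hres3 : F =ᵐ[volume.restrict (Set.uIoc y b)] (fun t => qb.eval t * iteratedDeriv n f t) :=
    (ae_restrict_iff' measurableSet_uIoc).mpr haeq3
  have hF1 : IntervalIntegrable F volume a x := (hint qa a x haIcc hxIcc).congr_ae hres1.symm
  have hF2 : IntervalIntegrable F volume x y := (hint qm x y hxIcc hyIcc).congr_ae hres2.symm
  have hF3 : IntervalIntegrable F volume y b := (hint qb y b hyIcc hbIcc).congr_ae hres3.symm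
  -- split the integral
  have hsplit : ∫ t in a..b, F t
      = (∫ t in a..x, F t) + (∫ t in x..y, F t) + (∫ t in y..b, F t) := by
    rw [intervalIntegral.integral_add_adjacent_intervals hF1 hF2,
      intervalIntegral.integral_add_adjacent_intervals (hF1.trans hF2) hF3]
  -- per-piece computation via repeated integration by parts
  have hCint : ∀ u v : ℝ, ∫ t in u..v, (Polynomial.C (n : ℝ)).eval t * f t
      = (n : ℝ) * ∫ t in u..v, f t := by
    intro u v
    simp only [Polynomial.eval_C]
    exact intervalIntegral.integral_const_mul _ _
  set S1 : ℝ := ∑ j ∈ Finset.range n, (-1 : ℝ) ^ j *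
      ((Polynomial.derivative^[j] qa).eval x * iteratedDeriv (n - 1 - j) f x
        - (Polynomial.derivative^[j] qa).eval a * iteratedDeriv (n - 1 - j) f a) with hS1
  set S2 : ℝ := ∑ j ∈ Finset.range n, (-1 : ℝ) ^ j *
      ((Polynomial.derivative^[j] qm).eval y * iteratedDeriv (n - 1 - j) f y
        - (Polynomial.derivative^[j] qm).eval x * iteratedDeriv (n - 1 - j) f x) with hS2
  set S3 : ℝ := ∑ j ∈ Finset.range n, (-1 : ℝ) ^ j *
      ((Polynomial.derivative^[j] qb).eval b * iteratedDeriv (n - 1 - j) f b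
        - (Polynomial.derivative^[j] qb).eval y * iteratedDeriv (n - 1 - j) f y) with hS3
  have e1 : ∫ t in a..x, F t = S1 + (-1 : ℝ) ^ n * ((n : ℝ) * ∫ t in a..x, f t) := by
    rw [intervalIntegral.integral_congr_ae haeq1, myIBP hf hca hbd n le_rfl qa haIcc hxIcc,
      hqa, myQderiv_top hP a hn, hCint, hS1]
  have e2 : ∫ t in x..y, F t = S2 + (-1 : ℝ) ^ n * ((n : ℝ) * ∫ t in x..y, f t) := by
    rw [intervalIntegral.integral_congr_ae haeq2, myIBP hf hca hbd n le_rfl qm hxIcc hyIcc,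
      hqm, myQderiv_top hP ((a + b)/2) hn, hCint, hS2]
  have e3 : ∫ t in y..b, F t = S3 + (-1 : ℝ) ^ n * ((n : ℝ) * ∫ t in y..b, f t) := by
    rw [intervalIntegral.integral_congr_ae haeq3, myIBP hf hca hbd n le_rfl qb hyIcc hbIcc,
      hqb, myQderiv_top hP b hn, hCint, hS3]
  have hfadd : (∫ t in a..x, f t) + (∫ t in x..y, f t) + (∫ t in y..b, f t)
      = ∫ t in a..b, f t := by
    rw [intervalIntegral.integral_add_adjacent_intervals (hfint a x haIcc hxIcc)
        (hfint x y hxIcc hyIcc),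
      intervalIntegral.integral_add_adjacent_intervals (hfint a y haIcc hyIcc)
        (hfint y b hyIcc hbIcc)]
  have etot : ∫ t in a..b, F t
      = (S1 + S2 + S3) + (-1 : ℝ) ^ n * (n : ℝ) * ∫ t in a..b, f t := by
    rw [hsplit, e1, e2, e3, ← hfadd]; ring
  -- the reflected boundary-term function
  set E : ℕ → ℝ := fun j => ((b - a) / 2) *
      ((P (n - 1 - j)).eval x * iteratedDeriv (n - 1 - j) f x
        + (P (n - 1 - j)).eval y * iteratedDeriv (n - 1 - j) f y)
    + (j : ℝ) * ((P (n - 1 - j + 1)).eval b * iteratedDeriv (n - 1 - j) f b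
        - (P (n - 1 - j + 1)).eval a * iteratedDeriv (n - 1 - j) f a) with hE
  set G : ℕ → ℝ := fun k => (-1 : ℝ) ^ k * (((b - a) / 2) *
      ((P k).eval x * iteratedDeriv k f x + (P k).eval y * iteratedDeriv k f y)
    + ((n : ℝ) - 1 - k) * ((P (k + 1)).eval b * iteratedDeriv k f b
        - (P (k + 1)).eval a * iteratedDeriv k f a)) with hG
  have hsum3 : S1 + S2 + S3 = ∑ j ∈ Finset.range n, (-1 : ℝ) ^ j * E j := by
    rw [hS1, hS2, hS3, ← Finset.sum_add_distrib, ← Finset.sum_add_distrib]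
    refine Finset.sum_congr rfl (fun j hj => ?_)
    have hjn := Finset.mem_range.mp hj
    rw [hqa, hqm, hqb, myQderiv_lt hP a hjn, myQderiv_lt hP ((a + b) / 2) hjn,
      myQderiv_lt hP b hjn]
    simp only [hE, Polynomial.eval_add, Polynomial.eval_mul, Polynomial.eval_sub,
      Polynomial.eval_X, Polynomial.eval_C]
    ring
  have hrefl : (∑ j ∈ Finset.range n, (-1 : ℝ) ^ j * E j)
      = (-1 : ℝ) ^ (n - 1) * ∑ k ∈ Finset.range n, G k := by
    rw [← Finset.sum_range_reflect (fun j => (-1 : ℝ) ^ j * E j) n, Finset.mul_sum]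
    refine Finset.sum_congr rfl (fun k hk => ?_)
    have hkn := Finset.mem_range.mp hk
    have hpw : (-1 : ℝ) ^ (n - 1 - k) = (-1 : ℝ) ^ (n - 1) * (-1 : ℝ) ^ k := by
      have h1 : (-1 : ℝ) ^ (n - 1 - k) * (-1 : ℝ) ^ k = (-1 : ℝ) ^ (n - 1) := by
        rw [← pow_add]; congr 1; omega
      have h2 : (-1 : ℝ) ^ k * (-1 : ℝ) ^ k = 1 := by
        rw [← pow_add]; exact Even.neg_one_pow ⟨k, rfl⟩
      calc (-1 : ℝ) ^ (n - 1 - k) = (-1 : ℝ) ^ (n - 1 - k) * ((-1 : ℝ) ^ k * (-1 : ℝ) ^ k) := by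
            rw [h2, mul_one]
        _ = (-1 : ℝ) ^ (n - 1) * (-1 : ℝ) ^ k := by rw [← mul_assoc, h1]
    have hidx : n - 1 - (n - 1 - k) = k := by omega
    have hcast : ((n - 1 - k : ℕ) : ℝ) = (n : ℝ) - 1 - k := by
      have h5 : n - 1 - k = n - (1 + k) := by omega
      rw [h5, Nat.cast_sub (by omega)]; push_cast; ring
    simp only [hE, hG, hidx, hcast, hpw]
    ring
  -- split G into T-part and F-part
  set GT : ℕ → ℝ := fun k => (-1 : ℝ) ^ k * ((b - a) / 2) *
      ((P k).eval x * iteratedDeriv k f x + (P k).eval y * iteratedDeriv k f y) with hGT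
  set GF : ℕ → ℝ := fun k => (-1 : ℝ) ^ k * ((n : ℝ) - 1 - k) *
      ((P (k + 1)).eval b * iteratedDeriv k f b
        - (P (k + 1)).eval a * iteratedDeriv k f a) with hGF
  have hGsplit : ∀ k, G k = GT k + GF k := fun k => by
    simp only [hG, hGT, hGF]; ring
  have hins : Finset.range n = insert 0 (Finset.Icc 1 (n - 1)) := by
    ext j
    simp only [Finset.mem_range, Finset.mem_insert, Finset.mem_Icc]
    omega
  have h0notin : (0 : ℕ) ∉ Finset.Icc 1 (n - 1) := by simp
  have hT0 : GT 0 = (b - a) * ((f x + f y) / 2) := by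
    simp only [hGT, hP.1, Polynomial.eval_one, iteratedDeriv_zero, pow_zero]
    ring
  have hTsum : ∑ k ∈ Finset.range n, GT k
      = (b - a) * ((f x + f y) / 2) + ∑ k ∈ Finset.Icc 1 (n - 1), (b - a) * Tterm P f a b x k := by
    rw [hins, Finset.sum_insert h0notin, hT0]
    congr 1
    refine Finset.sum_congr rfl (fun k _ => ?_)
    simp only [hGT, Tterm, ← hy]
    ring
  have hlast : GF (n - 1) = 0 := by
    have h6 : ((n - 1 : ℕ) : ℝ) = (n : ℝ) - 1 := by
      rw [Nat.cast_sub hn]; push_cast; ring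
    simp only [hGF, h6]
    ring
  have hFrange : ∑ k ∈ Finset.range n, GF k = ∑ k ∈ Finset.range (n - 1), GF k := by
    calc ∑ k ∈ Finset.range n, GF k = ∑ k ∈ Finset.range ((n - 1) + 1), GF k := by
          exact Finset.sum_congr (by rw [Nat.sub_add_cancel hn]) (fun _ _ => rfl)
      _ = (∑ k ∈ Finset.range (n - 1), GF k) + GF (n - 1) := Finset.sum_range_succ _ _
      _ = ∑ k ∈ Finset.range (n - 1), GF k := by rw [hlast, add_zero]
  have hFsum : ∑ k ∈ Finset.Icc 1 (n - 1), (b - a) * Ftilde P f n a b k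
      = ∑ k ∈ Finset.range (n - 1), GF k := by
    have hIcoEq : Finset.Icc 1 (n - 1) = Finset.Ico 1 n := by
      ext j; simp only [Finset.mem_Icc, Finset.mem_Ico]; omega
    rw [hIcoEq, Finset.sum_Ico_eq_sum_range]
    refine Finset.sum_congr rfl (fun i hi => ?_)
    have h8 : 1 + i = i + 1 := by omega
    rw [h8]
    simp only [Ftilde, hGF, Nat.add_sub_cancel]
    have h7 : ((i + 1 : ℕ) : ℝ) = (i : ℝ) + 1 := by push_cast; ring
    rw [h7, pow_succ]
    field_simp
    ring
  have hTF : ∑ k ∈ Finset.range n, G k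
      = (b - a) * ((f x + f y) / 2
          + ∑ k ∈ Finset.Icc 1 (n - 1), (Tterm P f a b x k + Ftilde P f n a b k)) := by
    have hG' : ∑ k ∈ Finset.range n, G k
        = (∑ k ∈ Finset.range n, GT k) + ∑ k ∈ Finset.range n, GF k := by
      rw [← Finset.sum_add_distrib]
      exact Finset.sum_congr rfl (fun k _ => hGsplit k)
    have hrhs : (b - a) * ((f x + f y) / 2
          + ∑ k ∈ Finset.Icc 1 (n - 1), (Tterm P f a b x k + Ftilde P f n a b k))
        = (b - a) * ((f x + f y) / 2)
          + ((∑ k ∈ Finset.Icc 1 (n - 1), (b - a) * Tterm P f a b x k)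
            + ∑ k ∈ Finset.Icc 1 (n - 1), (b - a) * Ftilde P f n a b k) := by
      rw [mul_add, Finset.mul_sum, ← Finset.sum_add_distrib]
      congr 1
      exact Finset.sum_congr rfl (fun k _ => by ring)
    rw [hG', hTsum, hFrange, ← hFsum, hrhs]
    ring
  -- final assembly
  have hpow : (-1 : ℝ) ^ n = -(-1 : ℝ) ^ (n - 1) := by
    calc (-1 : ℝ) ^ n = (-1 : ℝ) ^ ((n - 1) + 1) := by congr 1; omega
      _ = -(-1 : ℝ) ^ (n - 1) := by rw [pow_succ]; ring
  rw [etot, hsum3, hrefl, hTF, hpow]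
  rcases Nat.even_or_odd (n - 1) with hpar | hpar
  · rw [hpar.neg_one_pow]
    field_simp
    ring
  · rw [hpar.neg_one_pow]
    field_simp
    ring
end

section
/- Let n ≥ 1 and let f be n-times differentiable on an open interval containing [a,b] with f^(n) absolutely continuous on [a,b]. Then for every x ∈ [a,(a+b)/2] and every y ∈ [a,b], (1/n)·( (f(x)+f(a+b−x))/2 + Σ_{k=1}^{n−1} ( W_k(x,y) + F_k(y) ) ) − (1/(b−a))·∫_a^b f(t) dt = (1/((b−a)·n!))·∫_a^b (y−t)^{n−1}·S(t,x)·f^(n)(t) dt, where W_k(x,y) = ((−1)^k/(2·k!))·( (x−y)^k·f^{(k)}(x) + (a+b−x−y)^k·f^{(k)}(a+b−x) ) and F_k(y) = ((n−k)/k!)·( f^{(k−1)}(a)·(y−a)^k − f^{(k−1)}(b)·(y−b)^k )/(b−a). -/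
open MeasureTheory Set

lemma iteratedDerivWithin_isOpen_eqOn {f : ℝ → ℝ} {s : Set ℝ} (hs : IsOpen s) (k : ℕ) :
    Set.EqOn (iteratedDerivWithin k f s) (iteratedDeriv k f) s := by
  intro x hx
  simp only [iteratedDerivWithin, iteratedDeriv, iteratedFDerivWithin_of_isOpen k hs hx]

lemma hasDerivAt_iteratedDeriv' {f : ℝ → ℝ} {c d : ℝ} {n : ℕ}
    (hf : ContDiffOn ℝ (n : ℕ∞) f (Set.Ioo c d)) {k : ℕ} (hk : k < n) :
    ∀ t ∈ Set.Ioo c d, HasDerivAt (iteratedDeriv k f) (iteratedDeriv (k+1) f t) t := by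
  intro t ht
  have hdiff : DifferentiableOn ℝ (iteratedDerivWithin k f (Set.Ioo c d)) (Set.Ioo c d) :=
    hf.differentiableOn_iteratedDerivWithin (by exact_mod_cast hk) (uniqueDiffOn_Ioo c d)
  have h1 : DifferentiableAt ℝ (iteratedDeriv k f) t := by
    have := (hdiff t ht).differentiableAt (isOpen_Ioo.mem_nhds ht)
    exact this.congr_of_eventuallyEq <|
      Filter.eventuallyEq_of_mem (isOpen_Ioo.mem_nhds ht)
        fun z hz => ((iteratedDerivWithin_isOpen_eqOn isOpen_Ioo k) hz).symm
  rw [iteratedDeriv_succ]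
  exact h1.hasDerivAt

lemma continuousOn_iteratedDeriv' {f : ℝ → ℝ} {c d : ℝ} {n : ℕ}
    (hf : ContDiffOn ℝ (n : ℕ∞) f (Set.Ioo c d)) {k : ℕ} (hk : k ≤ n) :
    ContinuousOn (iteratedDeriv k f) (Set.Ioo c d) := by
  have := hf.continuousOn_iteratedDerivWithin (by exact_mod_cast hk) (uniqueDiffOn_Ioo c d)
  exact ContinuousOn.congr this (iteratedDerivWithin_isOpen_eqOn isOpen_Ioo k).symm

lemma intInt' {f : ℝ → ℝ} {c d : ℝ} {n : ℕ}
    (hf : ContDiffOn ℝ (n : ℕ∞) f (Set.Ioo c d)) {k : ℕ} (hk : k ≤ n)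
    {s r : ℝ} (hsub : Set.uIcc s r ⊆ Set.Ioo c d) (g : ℝ → ℝ) (hg : Continuous g) :
    IntervalIntegrable (fun t => g t * iteratedDeriv k f t) volume s r :=
  ((hg.continuousOn).mul ((continuousOn_iteratedDeriv' hf hk).mono hsub)).intervalIntegrable

lemma Jrec {f : ℝ → ℝ} {c d a b y : ℝ} {n : ℕ}
    (hf : ContDiffOn ℝ (n : ℕ∞) f (Set.Ioo c d))
    (hsub : Set.uIcc a b ⊆ Set.Ioo c d)
    {k : ℕ} (hk1 : 1 ≤ k) (hkn : k ≤ n) :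
    ∫ t in a..b, (y - t) ^ k * iteratedDeriv k f t
      = (y - b) ^ k * iteratedDeriv (k-1) f b - (y - a) ^ k * iteratedDeriv (k-1) f a
        + k * ∫ t in a..b, (y - t) ^ (k-1) * iteratedDeriv (k-1) f t := by
  obtain ⟨j, rfl⟩ : ∃ j, k = j + 1 := ⟨k - 1, by omega⟩
  have hder : ∀ t ∈ Set.uIcc a b,
      HasDerivAt (iteratedDeriv j f) (iteratedDeriv (j+1) f t) t :=
    fun t ht => hasDerivAt_iteratedDeriv' hf (by omega) t (hsub ht)
  have hu : ∀ t ∈ Set.uIcc a b,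
      HasDerivAt (fun t => (y - t) ^ (j+1)) (-((j+1 : ℝ) * (y - t) ^ j)) t := by
    intro t _
    have : HasDerivAt (fun t => (y - t) ^ (j+1)) (((j+1 : ℕ) : ℝ) * (y - id t) ^ (j + 1 - 1) * -1) t :=
      (((hasDerivAt_id t).const_sub y).pow (j+1))
    convert this using 1
    push_cast
    simp [mul_comm]
  have hu' : IntervalIntegrable (fun t => -((j+1 : ℝ) * (y - t) ^ j)) volume a b := by
    apply Continuous.intervalIntegrable; continuity
  have hv' : IntervalIntegrable (iteratedDeriv (j+1) f) volume a b := by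
    have := intInt' hf hkn hsub (fun _ => (1:ℝ)) continuous_const
    simpa using this
  have := intervalIntegral.integral_mul_deriv_eq_deriv_mul hu hder hu' hv'
  rw [this]
  have hsplit : ∫ t in a..b, -((j+1 : ℝ) * (y - t) ^ j) * iteratedDeriv j f t
      = -((j+1 : ℝ) * ∫ t in a..b, (y - t) ^ j * iteratedDeriv j f t) := by
    rw [← intervalIntegral.integral_const_mul, ← intervalIntegral.integral_neg]
    congr 1; ext t; ring
  rw [hsplit]
  simp only [Nat.add_sub_cancel]
  push_cast
  ring

lemma Jclosed {f : ℝ → ℝ} {c d a b y : ℝ} {n : ℕ}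
    (hf : ContDiffOn ℝ (n : ℕ∞) f (Set.Ioo c d))
    (hsub : Set.uIcc a b ⊆ Set.Ioo c d)
    {k : ℕ} (hkn : k ≤ n) :
    ∫ t in a..b, (y - t) ^ k * iteratedDeriv k f t
      = (k.factorial : ℝ) * (∫ t in a..b, f t)
        - ∑ j ∈ Finset.Icc 1 k, ((k.factorial : ℝ) / (j.factorial : ℝ)) *
            (iteratedDeriv (j-1) f a * (y - a) ^ j - iteratedDeriv (j-1) f b * (y - b) ^ j) := by
  induction k with
  | zero => simp [iteratedDeriv_zero]
  | succ p ih =>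
    rw [Jrec hf hsub (by omega) hkn]
    simp only [Nat.add_sub_cancel]
    rw [ih (by omega)]
    rw [Finset.sum_Icc_succ_top (by omega : 1 ≤ p + 1)]
    have hterm : ∀ j ∈ Finset.Icc 1 p,
        (((p+1).factorial : ℝ) / (j.factorial : ℝ)) *
            (iteratedDeriv (j-1) f a * (y - a) ^ j - iteratedDeriv (j-1) f b * (y - b) ^ j)
        = ((p:ℝ)+1) * (((p.factorial : ℝ) / (j.factorial : ℝ)) *
            (iteratedDeriv (j-1) f a * (y - a) ^ j - iteratedDeriv (j-1) f b * (y - b) ^ j)) := by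
      intro j hj
      rw [Nat.factorial_succ]
      push_cast
      ring
    rw [Finset.sum_congr rfl hterm, ← Finset.mul_sum,
      div_self (Nat.cast_pos.2 (Nat.factorial_pos (p+1))).ne']
    simp only [Nat.add_sub_cancel, Nat.factorial_succ]
    push_cast
    ring

lemma Skernel_split {a b x y : ℝ} {f : ℝ → ℝ} {c d : ℝ} {n : ℕ}
    (hf : ContDiffOn ℝ (n : ℕ∞) f (Set.Ioo c d))
    (hca : c < a) (hbd : b < d) (hab : a ≤ b)
    (hax : a ≤ x) (hxm : x ≤ (a + b) / 2) {m q : ℕ} (hq : q ≤ n) :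
    (∫ t in a..b, (y - t) ^ m * Skernel a b x t * iteratedDeriv q f t)
      = (∫ t in a..x, (y - t) ^ m * (t - a) * iteratedDeriv q f t)
        + (∫ t in x..(a+b-x), (y - t) ^ m * (t - (a+b)/2) * iteratedDeriv q f t)
        + (∫ t in (a+b-x)..b, (y - t) ^ m * (t - b) * iteratedDeriv q f t) := by
  have hxM : x ≤ a + b - x := by linarith
  have hMb : a + b - x ≤ b := by linarith
  have hxb : x ≤ b := by linarith
  have hsub1 : Set.uIcc a x ⊆ Set.Ioo c d := by
    rw [Set.uIcc_of_le hax]; intro t ht; exact ⟨by linarith [ht.1], by linarith [ht.2]⟩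
  have hsub2 : Set.uIcc x (a+b-x) ⊆ Set.Ioo c d := by
    rw [Set.uIcc_of_le hxM]; intro t ht
    exact ⟨by linarith [ht.1], by linarith [ht.2]⟩
  have hsub3 : Set.uIcc (a+b-x) b ⊆ Set.Ioo c d := by
    rw [Set.uIcc_of_le hMb]; intro t ht
    exact ⟨by linarith [ht.1], by linarith [ht.2]⟩
  -- a.e. equalities of the kernel integrand with the continuous pieces
  have e1 : (∫ t in a..x, (y - t) ^ m * Skernel a b x t * iteratedDeriv q f t)
      = ∫ t in a..x, (y - t) ^ m * (t - a) * iteratedDeriv q f t := by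
    apply intervalIntegral.integral_congr
    intro t ht
    rw [Set.uIcc_of_le hax] at ht
    simp only [Skernel, if_pos ht.2]
  have ae1 : (fun t => (y - t) ^ m * Skernel a b x t * iteratedDeriv q f t)
      =ᵐ[volume.restrict (Set.uIoc a x)] (fun t => (y - t) ^ m * (t - a) * iteratedDeriv q f t) := by
    filter_upwards [MeasureTheory.ae_restrict_mem measurableSet_uIoc] with t ht
    rw [Set.uIoc_of_le hax] at ht
    simp only [Skernel, if_pos ht.2]
  have ae2 : (fun t => (y - t) ^ m * Skernel a b x t * iteratedDeriv q f t)
      =ᵐ[volume.restrict (Set.uIoc x (a+b-x))]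
        (fun t => (y - t) ^ m * (t - (a+b)/2) * iteratedDeriv q f t) := by
    have h0 : ∀ᵐ t : ℝ ∂(volume.restrict (Set.uIoc x (a+b-x))), t ≠ a + b - x := by
      refine Filter.Eventually.filter_mono (MeasureTheory.ae_mono Measure.restrict_le_self) ?_
      have : volume ({a+b-x} : Set ℝ) = 0 := Real.volume_singleton
      exact MeasureTheory.compl_mem_ae_iff.2 this
    filter_upwards [MeasureTheory.ae_restrict_mem measurableSet_uIoc, h0] with t ht hne
    rw [Set.uIoc_of_le hxM] at ht
    have h1 : ¬ t ≤ x := not_le.2 ht.1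
    have h2 : t < a + b - x := lt_of_le_of_ne ht.2 hne
    simp only [Skernel, if_neg h1, if_pos h2]
  have ae3 : (fun t => (y - t) ^ m * Skernel a b x t * iteratedDeriv q f t)
      =ᵐ[volume.restrict (Set.uIoc (a+b-x) b)]
        (fun t => (y - t) ^ m * (t - b) * iteratedDeriv q f t) := by
    filter_upwards [MeasureTheory.ae_restrict_mem measurableSet_uIoc] with t ht
    rw [Set.uIoc_of_le hMb] at ht
    have h1 : ¬ t ≤ x := not_le.2 (lt_of_le_of_lt hxM ht.1)
    have h2 : ¬ t < a + b - x := not_lt.2 ht.1.le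
    simp only [Skernel, if_neg h1, if_neg h2]
  have i1 : IntervalIntegrable (fun t => (y - t) ^ m * Skernel a b x t * iteratedDeriv q f t)
      volume a x := by
    refine IntervalIntegrable.congr_ae ?_ ae1.symm
    have := intInt' hf hq hsub1 (fun t => (y - t) ^ m * (t - a)) (by continuity)
    simpa [mul_assoc] using this
  have i2 : IntervalIntegrable (fun t => (y - t) ^ m * Skernel a b x t * iteratedDeriv q f t)
      volume x (a+b-x) := by
    refine IntervalIntegrable.congr_ae ?_ ae2.symm
    have := intInt' hf hq hsub2 (fun t => (y - t) ^ m * (t - (a+b)/2)) (by continuity)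
    simpa [mul_assoc] using this
  have i3 : IntervalIntegrable (fun t => (y - t) ^ m * Skernel a b x t * iteratedDeriv q f t)
      volume (a+b-x) b := by
    refine IntervalIntegrable.congr_ae ?_ ae3.symm
    have := intInt' hf hq hsub3 (fun t => (y - t) ^ m * (t - b)) (by continuity)
    simpa [mul_assoc] using this
  rw [← intervalIntegral.integral_add_adjacent_intervals (i1.trans i2) i3,
    ← intervalIntegral.integral_add_adjacent_intervals i1 i2]
  have e2 : (∫ t in x..(a+b-x), (y - t) ^ m * Skernel a b x t * iteratedDeriv q f t)
      = ∫ t in x..(a+b-x), (y - t) ^ m * (t - (a+b)/2) * iteratedDeriv q f t :=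
    intervalIntegral.integral_congr_ae ((MeasureTheory.ae_restrict_iff' measurableSet_uIoc).1 ae2)
  have e3 : (∫ t in (a+b-x)..b, (y - t) ^ m * Skernel a b x t * iteratedDeriv q f t)
      = ∫ t in (a+b-x)..b, (y - t) ^ m * (t - b) * iteratedDeriv q f t :=
    intervalIntegral.integral_congr_ae ((MeasureTheory.ae_restrict_iff' measurableSet_uIoc).1 ae3)
  rw [e1, e2, e3]

lemma ibp_piece {f : ℝ → ℝ} {c d y e : ℝ} {n : ℕ}
    (hf : ContDiffOn ℝ (n : ℕ∞) f (Set.Ioo c d)) {m : ℕ} (hm : m + 1 ≤ n)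
    {s r : ℝ} (hsub : Set.uIcc s r ⊆ Set.Ioo c d) :
    (∫ t in s..r, (y - t) ^ m * (t - e) * iteratedDeriv (m+1) f t)
      = (y - r) ^ m * (r - e) * iteratedDeriv m f r
        - (y - s) ^ m * (s - e) * iteratedDeriv m f s
        - (∫ t in s..r, (y - t) ^ m * iteratedDeriv m f t)
        + (m : ℝ) * ∫ t in s..r, (y - t) ^ (m-1) * (t - e) * iteratedDeriv m f t := by
  have hder : ∀ t ∈ Set.uIcc s r,
      HasDerivAt (iteratedDeriv m f) (iteratedDeriv (m+1) f t) t :=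
    fun t ht => hasDerivAt_iteratedDeriv' hf (by omega) t (hsub ht)
  have hu : ∀ t ∈ Set.uIcc s r,
      HasDerivAt (fun t => (y - t) ^ m * (t - e))
        ((y - t) ^ m - (m : ℝ) * (y - t) ^ (m-1) * (t - e)) t := by
    intro t _
    have h1 : HasDerivAt (fun t => (y - t) ^ m) ((m : ℝ) * (y - t) ^ (m-1) * (-1)) t :=
      ((hasDerivAt_id t).const_sub y).pow m
    have h2 : HasDerivAt (fun t : ℝ => t - e) 1 t := (hasDerivAt_id t).sub_const e
    have : HasDerivAt (fun t => (y - t) ^ m * (t - e))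
        ((m : ℝ) * (y - t) ^ (m - 1) * -1 * (t - e) + (y - t) ^ m * 1) t := h1.mul h2
    convert this using 1
    ring
  have hu' : IntervalIntegrable (fun t => (y - t) ^ m - (m : ℝ) * (y - t) ^ (m-1) * (t - e))
      volume s r := by
    apply Continuous.intervalIntegrable; continuity
  have hv' : IntervalIntegrable (iteratedDeriv (m+1) f) volume s r := by
    have := intInt' hf hm hsub (fun _ => (1:ℝ)) continuous_const
    simpa using this
  have := intervalIntegral.integral_mul_deriv_eq_deriv_mul hu hder hu' hv'
  rw [this]
  have hsplit : (∫ t in s..r,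
        ((y - t) ^ m - (m : ℝ) * (y - t) ^ (m-1) * (t - e)) * iteratedDeriv m f t)
      = (∫ t in s..r, (y - t) ^ m * iteratedDeriv m f t)
        - (m : ℝ) * ∫ t in s..r, (y - t) ^ (m-1) * (t - e) * iteratedDeriv m f t := by
    have ia : IntervalIntegrable (fun t => (y - t) ^ m * iteratedDeriv m f t) volume s r :=
      intInt' hf (by omega) hsub (fun t => (y - t) ^ m) (by continuity)
    have ib : IntervalIntegrable (fun t => (y - t) ^ (m-1) * (t - e) * iteratedDeriv m f t)
        volume s r := by
      have := intInt' hf (by omega : m ≤ n) hsub (fun t => (y - t) ^ (m-1) * (t - e))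
        (by continuity)
      simpa [mul_assoc] using this
    have : (∫ t in s..r,
          ((y - t) ^ m - (m : ℝ) * (y - t) ^ (m-1) * (t - e)) * iteratedDeriv m f t)
        = (∫ t in s..r, ((y - t) ^ m * iteratedDeriv m f t
            - (m : ℝ) * ((y - t) ^ (m-1) * (t - e) * iteratedDeriv m f t))) := by
      congr 1; ext t; ring
    rw [this, intervalIntegral.integral_sub ia (ib.const_mul _),
      intervalIntegral.integral_const_mul]
  rw [hsplit]
  ring

lemma Grec {f : ℝ → ℝ} {c d a b x y : ℝ} {n : ℕ}
    (hf : ContDiffOn ℝ (n : ℕ∞) f (Set.Ioo c d))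
    (hca : c < a) (hbd : b < d) (hab : a ≤ b)
    (hax : a ≤ x) (hxm : x ≤ (a + b) / 2) {m : ℕ} (hm : m + 1 ≤ n) :
    (∫ t in a..b, (y - t) ^ m * Skernel a b x t * iteratedDeriv (m+1) f t)
      = (b - a) / 2 * ((y - x) ^ m * iteratedDeriv m f x
          + (y - (a+b-x)) ^ m * iteratedDeriv m f (a+b-x))
        + (m : ℝ) * (∫ t in a..b, (y - t) ^ (m-1) * Skernel a b x t * iteratedDeriv m f t)
        - (∫ t in a..b, (y - t) ^ m * iteratedDeriv m f t) := by
  have hxM : x ≤ a + b - x := by linarith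
  have hMb : a + b - x ≤ b := by linarith
  have hsub1 : Set.uIcc a x ⊆ Set.Ioo c d := by
    rw [Set.uIcc_of_le hax]; intro t ht; exact ⟨by linarith [ht.1], by linarith [ht.2]⟩
  have hsub2 : Set.uIcc x (a+b-x) ⊆ Set.Ioo c d := by
    rw [Set.uIcc_of_le hxM]; intro t ht; exact ⟨by linarith [ht.1], by linarith [ht.2]⟩
  have hsub3 : Set.uIcc (a+b-x) b ⊆ Set.Ioo c d := by
    rw [Set.uIcc_of_le hMb]; intro t ht; exact ⟨by linarith [ht.1], by linarith [ht.2]⟩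
  rw [Skernel_split hf hca hbd hab hax hxm hm,
    ibp_piece hf hm hsub1, ibp_piece hf hm hsub2, ibp_piece hf hm hsub3,
    Skernel_split hf hca hbd hab hax hxm (by omega : m ≤ n)]
  have ia : IntervalIntegrable (fun t => (y - t) ^ m * iteratedDeriv m f t) volume a x :=
    intInt' hf (by omega) hsub1 (fun t => (y - t) ^ m) (by continuity)
  have ib : IntervalIntegrable (fun t => (y - t) ^ m * iteratedDeriv m f t)
      volume x (a+b-x) :=
    intInt' hf (by omega) hsub2 (fun t => (y - t) ^ m) (by continuity)
  have ic : IntervalIntegrable (fun t => (y - t) ^ m * iteratedDeriv m f t)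
      volume (a+b-x) b :=
    intInt' hf (by omega) hsub3 (fun t => (y - t) ^ m) (by continuity)
  have hJ : (∫ t in a..b, (y - t) ^ m * iteratedDeriv m f t)
      = (∫ t in a..x, (y - t) ^ m * iteratedDeriv m f t)
        + (∫ t in x..(a+b-x), (y - t) ^ m * iteratedDeriv m f t)
        + (∫ t in (a+b-x)..b, (y - t) ^ m * iteratedDeriv m f t) := by
    rw [intervalIntegral.integral_add_adjacent_intervals ia ib,
      intervalIntegral.integral_add_adjacent_intervals (ia.trans ib) ic]
  rw [hJ]
  ring

lemma main_ind {f : ℝ → ℝ} {c d a b x y : ℝ} {n : ℕ}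
    (hf : ContDiffOn ℝ (n : ℕ∞) f (Set.Ioo c d))
    (hca : c < a) (hbd : b < d) (hab : a ≤ b)
    (hax : a ≤ x) (hxm : x ≤ (a + b) / 2)
    {p : ℕ} (hp : p + 1 ≤ n) :
    (∫ t in a..b, (y - t) ^ p * Skernel a b x t * iteratedDeriv (p+1) f t)
      = (p.factorial : ℝ) * (b - a) / 2 * (f x + f (a+b-x))
        + (∑ k ∈ Finset.Icc 1 p, ((p.factorial : ℝ) / (k.factorial : ℝ)) *
            ((b - a) / 2 * ((-1:ℝ)^k * ((x - y)^k * iteratedDeriv k f x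
                + (a + b - x - y)^k * iteratedDeriv k f (a+b-x)))
              + ((p:ℝ) + 1 - k) *
                (iteratedDeriv (k-1) f a * (y - a)^k - iteratedDeriv (k-1) f b * (y - b)^k)))
        - ((p+1).factorial : ℝ) * ∫ t in a..b, f t := by
  have hsub : Set.uIcc a b ⊆ Set.Ioo c d := by
    rw [Set.uIcc_of_le hab]; intro t ht; exact ⟨by linarith [ht.1], by linarith [ht.2]⟩
  induction p with
  | zero =>
    rw [Grec hf hca hbd hab hax hxm hp]
    simp [iteratedDeriv_zero]
  | succ p ih =>
    rw [Grec hf hca hbd hab hax hxm hp]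
    simp only [Nat.add_sub_cancel]
    rw [ih (by omega), Jclosed hf hsub (by omega : p + 1 ≤ n)]
    have hyx : (y - x) ^ (p+1) = (-1:ℝ)^(p+1) * (x - y)^(p+1) := by
      rw [show y - x = -(x - y) by ring, neg_pow]
    have hyM : (y - (a+b-x)) ^ (p+1) = (-1:ℝ)^(p+1) * (a + b - x - y)^(p+1) := by
      rw [show y - (a+b-x) = -(a + b - x - y) by ring, neg_pow]
    rw [hyx, hyM]
    rw [Finset.sum_Icc_succ_top (by omega : 1 ≤ p + 1),
      Finset.sum_Icc_succ_top (by omega : 1 ≤ p + 1),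
      div_self (Nat.cast_pos.2 (Nat.factorial_pos (p+1))).ne']
    have hcomb : ∀ k ∈ Finset.Icc 1 p,
        (((p+1).factorial : ℝ) / (k.factorial : ℝ)) *
            ((b - a) / 2 * ((-1:ℝ)^k * ((x - y)^k * iteratedDeriv k f x
                + (a + b - x - y)^k * iteratedDeriv k f (a+b-x)))
              + ((p:ℝ) + 1 + 1 - k) *
                (iteratedDeriv (k-1) f a * (y - a)^k - iteratedDeriv (k-1) f b * (y - b)^k))
        = ((p:ℝ)+1) * (((p.factorial : ℝ) / (k.factorial : ℝ)) *
            ((b - a) / 2 * ((-1:ℝ)^k * ((x - y)^k * iteratedDeriv k f x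
                + (a + b - x - y)^k * iteratedDeriv k f (a+b-x)))
              + ((p:ℝ) + 1 - k) *
                (iteratedDeriv (k-1) f a * (y - a)^k - iteratedDeriv (k-1) f b * (y - b)^k)))
          + (((p+1).factorial : ℝ) / (k.factorial : ℝ)) *
              (iteratedDeriv (k-1) f a * (y - a)^k - iteratedDeriv (k-1) f b * (y - b)^k) := by
      intro k hk
      rw [Nat.factorial_succ]
      push_cast
      ring
    push_cast
    rw [Finset.sum_congr rfl hcomb, Finset.sum_add_distrib, ← Finset.mul_sum]
    simp only [Nat.add_sub_cancel, Nat.factorial_succ]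
    push_cast
    ring

theorem stmt_12 (n : ℕ) (hn : 1 ≤ n) (a b c d : ℝ) (hab : a < b)
    (hca : c < a) (hbd : b < d) (f : ℝ → ℝ)
    (hf : ContDiffOn ℝ (n : ℕ∞) f (Set.Ioo c d))
    (hAC : AbsCont (iteratedDeriv n f) a b)
    (x : ℝ) (hx : x ∈ Set.Icc a ((a + b) / 2)) (y : ℝ) (hy : y ∈ Set.Icc a b) :
    (1 / (n : ℝ)) *
        ((f x + f (a + b - x)) / 2 +
          ∑ k ∈ Finset.Icc 1 (n - 1),
            (((-1 : ℝ) ^ k / (2 * (k.factorial : ℝ))) *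
                ((x - y) ^ k * iteratedDeriv k f x +
                  (a + b - x - y) ^ k * iteratedDeriv k f (a + b - x))
              + (((n : ℝ) - k) / (k.factorial : ℝ)) *
                  ((iteratedDeriv (k - 1) f a * (y - a) ^ k -
                      iteratedDeriv (k - 1) f b * (y - b) ^ k) / (b - a))))
      - (1 / (b - a)) * ∫ t in a..b, f t
    = (1 / ((b - a) * (n.factorial : ℝ))) *
        ∫ t in a..b, (y - t) ^ (n - 1) * Skernel a b x t * iteratedDeriv n f t := by
  obtain ⟨N, rfl⟩ : ∃ N, n = N + 1 := ⟨n - 1, by omega⟩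
  have hba : (b - a) ≠ 0 := sub_ne_zero.2 hab.ne'
  simp only [Nat.add_sub_cancel]
  rw [main_ind hf hca hbd hab.le hx.1 hx.2 (le_refl (N+1))]
  push_cast
  have hsum : ∑ k ∈ Finset.Icc 1 N, (((N.factorial : ℝ) / (k.factorial : ℝ)) *
        ((b - a) / 2 * ((-1:ℝ)^k * ((x - y)^k * iteratedDeriv k f x
            + (a + b - x - y)^k * iteratedDeriv k f (a+b-x)))
          + ((N:ℝ) + 1 - k) *
            (iteratedDeriv (k-1) f a * (y - a)^k - iteratedDeriv (k-1) f b * (y - b)^k)))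
      = (b - a) * (N.factorial : ℝ) * ∑ k ∈ Finset.Icc 1 N,
          (((-1 : ℝ) ^ k / (2 * (k.factorial : ℝ))) *
              ((x - y) ^ k * iteratedDeriv k f x +
                (a + b - x - y) ^ k * iteratedDeriv k f (a + b - x))
            + (((N:ℝ) + 1 - k) / (k.factorial : ℝ)) *
                ((iteratedDeriv (k - 1) f a * (y - a) ^ k -
                    iteratedDeriv (k - 1) f b * (y - b) ^ k) / (b - a))) := by
    rw [Finset.mul_sum]
    refine Finset.sum_congr rfl fun k _ => ?_
    have hk0 : (k.factorial : ℝ) ≠ 0 := (Nat.cast_pos.2 (Nat.factorial_pos k)).ne'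
    field_simp
  rw [hsum]
  have hN1 : ((N+1).factorial : ℝ) = ((N:ℝ) + 1) * (N.factorial : ℝ) := by
    rw [Nat.factorial_succ]; push_cast; ring
  rw [hN1]
  have hN0 : ((N:ℝ) + 1) ≠ 0 := by positivity
  have hNf : (N.factorial : ℝ) ≠ 0 := (Nat.cast_pos.2 (Nat.factorial_pos N)).ne'
  field_simp
  ring
end
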